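/- arXiv:0905.1304 — 9 statements merged into one kernel-verified Lean document; each statement's English description precedes it below -/
import Mathlib

section
/- For every l ≥ 1 and every polynomial g ∈ ℝ[Y_1,…,Y_l], the function λ ↦ g(q_1(λ),…,q_l(λ)), where q_r(λ) = Σ_{i=1}^{|λ|} (λ_i + |λ| − i)^r, belongs to the algebra A of regular functions on Y. (Equivalently: every function of the form H_ψ(λ) = ψ(λ_1+|λ|−1, λ_2+|λ|−2, …, λ_{|λ|}, 0, 0, …), with ψ a symmetric function, belongs to A.) -/
open scoped BigOperators Classical

/-- Number of saturated chains `μ = ν⁰ ⊂ ν¹ ⊂ ⋯ ⊂ νᵏ = ν` in the Young graph,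
each step adding one box; this is `dim(μ,ν)`. -/
noncomputable def dimSkew (μ ν : YoungDiagram) : ℕ :=
  Set.ncard {f : Fin (ν.card - μ.card + 1) → YoungDiagram |
    f 0 = μ ∧ f (Fin.last _) = ν ∧
    ∀ i : Fin (ν.card - μ.card),
      f i.castSucc ≤ f i.succ ∧ (f i.succ).card = (f i.castSucc).card + 1}

/-- `dim λ`, the number of standard Young tableaux of shape `λ`. -/
noncomputable def dimSYT (lam : YoungDiagram) : ℕ := dimSkew ⊥ lam

/-- The `n`-th Plancherel average `⟨F⟩ₙ = ∑_{|λ|=n} F(λ)·(dim λ)²/n!`. -/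
noncomputable def plancherelAvg (n : ℕ) (F : YoungDiagram → ℝ) : ℝ :=
  ∑ᶠ lam ∈ {lam : YoungDiagram | lam.card = n},
    F lam * ((dimSYT lam : ℝ) ^ 2 / (n.factorial : ℝ))

/-- Content power sums: `p̂_r(λ) = ∑_{□∈λ} c(□)^r` (so `p̂_0(λ) = |λ|`). -/
noncomputable def phat (r : ℕ) (lam : YoungDiagram) : ℝ :=
  ∑ c ∈ lam.cells, ((c.2 : ℝ) - (c.1 : ℝ)) ^ r

/-- `q_r(λ) = ∑_{i=1}^{|λ|} (λ_i + |λ| - i)^r`. -/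
noncomputable def qfun (r : ℕ) (lam : YoungDiagram) : ℝ :=
  ∑ i ∈ Finset.range lam.card,
    ((lam.rowLen i : ℝ) + (lam.card : ℝ) - ((i : ℝ) + 1)) ^ r

/-- `p*_m(λ) = ∑_{i=1}^{ℓ(λ)} [(λ_i - i)^m - (-i)^m]` (1-based rows). -/
noncomputable def pstar (m : ℕ) (lam : YoungDiagram) : ℝ :=
  ∑ i ∈ Finset.range (lam.colLen 0),
    (((lam.rowLen i : ℝ) - ((i : ℝ) + 1)) ^ m - (-((i : ℝ) + 1)) ^ m)

/-- The algebra `A` of regular functions on `Y`, generated by the `p*_m`, `m ≥ 1`. -/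
noncomputable def regularAlg : Subalgebra ℝ (YoungDiagram → ℝ) :=
  Algebra.adjoin ℝ {f | ∃ m : ℕ, 1 ≤ m ∧ f = pstar m}

/-- The filtration term `A^(d)`: the span of monomials `(p*_1)^{r_1}(p*_2)^{r_2}⋯`
with `1·r_1 + 2·r_2 + ⋯ ≤ d`. -/
noncomputable def Afil (d : ℕ) : Submodule ℝ (YoungDiagram → ℝ) :=
  Submodule.span ℝ {f | ∃ r : ℕ →₀ ℕ, r 0 = 0 ∧ (r.sum fun m k => m * k) ≤ d ∧
    f = r.prod fun m k => pstar m ^ k}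

/-! ### Auxiliary lemmas -/

lemma YD.card_eq_sum_rowLen (μ : YoungDiagram) :
    μ.card = ∑ i ∈ Finset.range (μ.colLen 0), μ.rowLen i := by
  have : μ.cells = (Finset.range (μ.colLen 0)).biUnion (fun i => μ.row i) := by
    ext c
    simp only [Finset.mem_biUnion, Finset.mem_range, YoungDiagram.mem_row_iff,
      YoungDiagram.mem_cells]
    constructor
    · intro hc
      refine ⟨c.1, ?_, hc, rfl⟩
      rw [← YoungDiagram.mem_iff_lt_colLen]
      exact μ.up_left_mem le_rfl (Nat.zero_le _) hc
    · rintro ⟨i, _, hc, _⟩; exact hc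
  rw [YoungDiagram.card, this, Finset.card_biUnion]
  · exact Finset.sum_congr rfl fun i _ => (μ.rowLen_eq_card (i := i)).symm
  · intro i _ j _ hij
    simp only [Finset.disjoint_left, YoungDiagram.mem_row_iff]
    rintro c ⟨_, rfl⟩ ⟨_, h⟩; exact hij h

lemma YD.colLen_le_card (μ : YoungDiagram) : μ.colLen 0 ≤ μ.card := by
  rw [YD.card_eq_sum_rowLen]
  calc μ.colLen 0 = ∑ _i ∈ Finset.range (μ.colLen 0), 1 := by simp
    _ ≤ _ := Finset.sum_le_sum fun i hi => by
        rw [Finset.mem_range, ← YoungDiagram.mem_iff_lt_colLen] at hi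
        rw [Nat.one_le_iff_ne_zero]
        intro h0
        rw [YoungDiagram.mem_iff_lt_rowLen, h0] at hi
        exact Nat.not_lt_zero _ hi

lemma YD.rowLen_eq_zero (μ : YoungDiagram) {i : ℕ} (h : μ.colLen 0 ≤ i) :
    μ.rowLen i = 0 := by
  by_contra h0
  have : (i, 0) ∈ μ := by
    rw [YoungDiagram.mem_iff_lt_rowLen]; exact Nat.pos_of_ne_zero h0
  rw [YoungDiagram.mem_iff_lt_colLen] at this
  omega

lemma YD.exists_poly_sum_pow (k : ℕ) : ∃ P : Polynomial ℝ, ∀ n : ℕ,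
    ∑ i ∈ Finset.range n, (-((i : ℝ) + 1)) ^ k = Polynomial.eval (n : ℝ) P := by
  classical
  set Q : Polynomial ℚ :=
    Polynomial.C ((-1 : ℚ) ^ k) *
      ((∑ i ∈ Finset.range (k + 1),
          Polynomial.C (bernoulli i * ((k + 1).choose i) / (k + 1)) * (Polynomial.X + 1) ^ (k + 1 - i))
        - Polynomial.C ((0 : ℚ) ^ k)) with hQ
  have hQeval : ∀ n : ℕ, Q.eval (n : ℚ) = ∑ i ∈ Finset.range n, (-((i : ℚ) + 1)) ^ k := by
    intro n
    have hsum := sum_range_pow (n + 1) k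
    have h1 : Q.eval (n : ℚ)
        = (-1 : ℚ) ^ k * ((∑ i ∈ Finset.range (k + 1),
            bernoulli i * ((k + 1).choose i) * ((n : ℚ) + 1) ^ (k + 1 - i) / (k + 1)) - (0 : ℚ) ^ k) := by
      simp [hQ, Polynomial.eval_finset_sum, mul_div_assoc]
      exact Finset.sum_congr rfl fun x _ => by ring
    rw [h1]
    have h2 : ((n : ℚ) + 1) = ((n + 1 : ℕ) : ℚ) := by push_cast; ring
    simp_rw [h2]
    rw [← hsum]
    rw [Finset.sum_range_succ' (fun j => (j : ℚ) ^ k) n]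
    push_cast
    rw [add_sub_cancel_right]
    rw [Finset.mul_sum]
    exact Finset.sum_congr rfl fun i _ => by rw [← mul_pow]; ring_nf
  refine ⟨Q.map (algebraMap ℚ ℝ), fun n => ?_⟩
  rw [show ((n : ℝ)) = (((n : ℕ) : ℚ) : ℝ) by push_cast; ring]
  rw [Polynomial.eval_map]
  rw [show (((n : ℚ) : ℝ)) = algebraMap ℚ ℝ (n : ℚ) by norm_num]
  rw [Polynomial.eval₂_at_apply]
  rw [hQeval n]
  push_cast
  ring

lemma YD.pstar_mem {m : ℕ} (hm : 1 ≤ m) : pstar m ∈ regularAlg :=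
  Algebra.subset_adjoin ⟨m, hm, rfl⟩

lemma YD.cardfun_mem : (fun lam : YoungDiagram => (lam.card : ℝ)) ∈ regularAlg := by
  have h : (fun lam : YoungDiagram => (lam.card : ℝ)) = pstar 1 := by
    funext lam
    rw [pstar, YD.card_eq_sum_rowLen]
    push_cast
    exact Finset.sum_congr rfl fun i _ => by ring
  rw [h]
  exact YD.pstar_mem le_rfl

lemma YD.polyCard_mem (P : Polynomial ℝ) :
    (fun lam : YoungDiagram => Polynomial.eval ((lam.card : ℝ)) P) ∈ regularAlg := by
  have h : (fun lam : YoungDiagram => Polynomial.eval ((lam.card : ℝ)) P)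
      = ∑ i ∈ Finset.range (P.natDegree + 1),
          (P.coeff i) • ((fun lam : YoungDiagram => (lam.card : ℝ)) ^ i) := by
    funext lam
    rw [Polynomial.eval_eq_sum_range]
    simp [Finset.sum_apply]
  rw [h]
  exact Subalgebra.sum_mem _ fun i _ =>
    Subalgebra.smul_mem _ (Subalgebra.pow_mem _ YD.cardfun_mem i) _

lemma YD.sum_shift (k : ℕ) (lam : YoungDiagram) :
    ∑ i ∈ Finset.range lam.card, ((lam.rowLen i : ℝ) - ((i : ℝ) + 1)) ^ k
      = pstar k lam + ∑ i ∈ Finset.range lam.card, (-((i : ℝ) + 1)) ^ k := by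
  have h1 : pstar k lam
      = ∑ i ∈ Finset.range lam.card,
          (((lam.rowLen i : ℝ) - ((i : ℝ) + 1)) ^ k - (-((i : ℝ) + 1)) ^ k) := by
    rw [pstar]
    refine Finset.sum_subset (Finset.range_subset_range.2 (YD.colLen_le_card lam)) ?_
    intro i _ hi
    rw [Finset.mem_range, not_lt] at hi
    rw [YD.rowLen_eq_zero lam hi]
    norm_num
  rw [h1, Finset.sum_sub_distrib]
  ring

lemma YD.Sfun_mem (k : ℕ) :
    (fun lam : YoungDiagram =>
      ∑ i ∈ Finset.range lam.card, ((lam.rowLen i : ℝ) - ((i : ℝ) + 1)) ^ k)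
      ∈ regularAlg := by
  rcases Nat.eq_zero_or_pos k with rfl | hk
  · have h : (fun lam : YoungDiagram =>
        ∑ i ∈ Finset.range lam.card, ((lam.rowLen i : ℝ) - ((i : ℝ) + 1)) ^ 0)
          = fun lam : YoungDiagram => (lam.card : ℝ) := by
      funext lam; simp
    rw [h]; exact YD.cardfun_mem
  · obtain ⟨P, hP⟩ := YD.exists_poly_sum_pow k
    have h : (fun lam : YoungDiagram =>
        ∑ i ∈ Finset.range lam.card, ((lam.rowLen i : ℝ) - ((i : ℝ) + 1)) ^ k)
          = pstar k + fun lam : YoungDiagram => Polynomial.eval ((lam.card : ℝ)) P := by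
      funext lam
      rw [Pi.add_apply, YD.sum_shift, hP lam.card]
    rw [h]
    exact add_mem (YD.pstar_mem hk) (YD.polyCard_mem P)

lemma YD.qfun_mem (r : ℕ) : qfun r ∈ regularAlg := by
  have h : qfun r = ∑ j ∈ Finset.range (r + 1),
      ((r.choose j : ℝ)) •
        ((fun lam : YoungDiagram => (lam.card : ℝ)) ^ (r - j) *
          fun lam : YoungDiagram =>
            ∑ i ∈ Finset.range lam.card, ((lam.rowLen i : ℝ) - ((i : ℝ) + 1)) ^ j) := by
    funext lam
    rw [qfun]
    have hterm : ∀ i, ((lam.rowLen i : ℝ) + (lam.card : ℝ) - ((i : ℝ) + 1))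
        = ((lam.rowLen i : ℝ) - ((i : ℝ) + 1)) + (lam.card : ℝ) := fun i => by ring
    simp_rw [hterm, add_pow]
    rw [Finset.sum_comm]
    rw [Finset.sum_apply]
    refine Finset.sum_congr rfl fun j _ => ?_
    simp only [Pi.smul_apply, Pi.mul_apply, Pi.pow_apply, smul_eq_mul, Finset.mul_sum]
    exact Finset.sum_congr rfl fun i _ => by ring
  rw [h]
  exact Subalgebra.sum_mem _ fun j _ =>
    Subalgebra.smul_mem _
      (mul_mem (Subalgebra.pow_mem _ YD.cardfun_mem _) (YD.Sfun_mem j)) _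

/-- Every polynomial in the functions `q_r(λ) = ∑_{i=1}^{|λ|} (λ_i + |λ| - i)^r`
belongs to the algebra `A` of regular functions on `Y`. -/
theorem qfun_polynomial_mem_regularAlg
    (l : ℕ) (hl : 1 ≤ l) (g : MvPolynomial (Fin l) ℝ) :
    (fun lam => MvPolynomial.eval (fun i : Fin l => qfun (i.val + 1) lam) g)
      ∈ regularAlg := by
  induction g using MvPolynomial.induction_on with
  | C a =>
      have h : (fun lam : YoungDiagram =>
          MvPolynomial.eval (fun i : Fin l => qfun (i.val + 1) lam) (MvPolynomial.C a))
            = algebraMap ℝ (YoungDiagram → ℝ) a := by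
        funext lam; simp
      rw [h]
      exact Subalgebra.algebraMap_mem _ a
  | add p q hp hq =>
      have h : (fun lam : YoungDiagram =>
          MvPolynomial.eval (fun i : Fin l => qfun (i.val + 1) lam) (p + q))
            = (fun lam => MvPolynomial.eval (fun i : Fin l => qfun (i.val + 1) lam) p)
              + fun lam => MvPolynomial.eval (fun i : Fin l => qfun (i.val + 1) lam) q := by
        funext lam; simp
      rw [h]
      exact add_mem hp hq
  | mul_X p i hp =>
      have h : (fun lam : YoungDiagram =>
          MvPolynomial.eval (fun i : Fin l => qfun (i.val + 1) lam) (p * MvPolynomial.X i))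
            = (fun lam => MvPolynomial.eval (fun i : Fin l => qfun (i.val + 1) lam) p)
              * qfun (i.val + 1) := by
        funext lam; simp
      rw [h]
      exact mul_mem hp (YD.qfun_mem _)
end

section
/- For every Young diagram μ with m = |μ| and every integer n ≥ 0: Σ_{λ∈Y_n} ((dim λ)²/n!) · n^{↓m} · dim(μ,λ)/dim λ = C(n,m) · dim μ, where n^{↓m} = n(n−1)⋯(n−m+1) is the falling factorial and C(n,m) is the binomial coefficient (equal to 0 when n < m). In other words, the n-th Plancherel average of the function F_μ(λ) = |λ|^{↓m}·dim(μ,λ)/dim λ equals C(n,m)·dim μ. -/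
open scoped BigOperators Classical

namespace PlanchAux

def ChainSet (μ ν : YoungDiagram) (k : ℕ) : Set (Fin (k+1) → YoungDiagram) :=
  {f | f 0 = μ ∧ f (Fin.last k) = ν ∧
    ∀ i : Fin k, f i.castSucc ≤ f i.succ ∧ (f i.succ).card = (f i.castSucc).card + 1}

lemma dimSkew_eq_chainSet (μ ν : YoungDiagram) (k : ℕ) (h : ν.card - μ.card = k) :
    dimSkew μ ν = Nat.card (ChainSet μ ν k) := by
  subst h
  rw [dimSkew, ← Nat.card_coe_set_eq]
  rfl

lemma cells_injective : Function.Injective YoungDiagram.cells := by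
  intro a b h; cases a; cases b; simpa using h

lemma finite_le (ν : YoungDiagram) : {σ : YoungDiagram | σ ≤ ν}.Finite := by
  have h : {σ : YoungDiagram | σ ≤ ν} ⊆ YoungDiagram.cells ⁻¹' ↑ν.cells.powerset := by
    intro σ hσ
    simp only [Set.mem_preimage, Finset.mem_coe, Finset.mem_powerset]
    exact YoungDiagram.cells_subset_iff.2 hσ
  exact Set.Finite.subset (Set.Finite.preimage (cells_injective.injOn)
    (ν.cells.powerset.finite_toSet)) h

lemma lt_card_of_mem {lam : YoungDiagram} {i j : ℕ} (h : (i, j) ∈ lam) :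
    i < lam.card ∧ j < lam.card := by
  constructor
  · have h1 : i < lam.colLen j := YoungDiagram.mem_iff_lt_colLen.1 h
    have h2 : lam.colLen j ≤ lam.card := by
      rw [YoungDiagram.colLen_eq_card]
      exact Finset.card_le_card (Finset.filter_subset _ _)
    omega
  · have h1 : j < lam.rowLen i := YoungDiagram.mem_iff_lt_rowLen.1 h
    have h2 : lam.rowLen i ≤ lam.card := by
      rw [YoungDiagram.rowLen_eq_card]
      exact Finset.card_le_card (Finset.filter_subset _ _)
    omega

lemma finite_card (n : ℕ) : {lam : YoungDiagram | lam.card = n}.Finite := by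
  have h : {lam : YoungDiagram | lam.card = n} ⊆
      YoungDiagram.cells ⁻¹' ↑((Finset.range n ×ˢ Finset.range n).powerset) := by
    intro lam hlam
    simp only [Set.mem_preimage, Finset.mem_coe, Finset.mem_powerset, Finset.subset_iff]
    rintro ⟨i, j⟩ hc
    have := lt_card_of_mem (lam := lam) (YoungDiagram.mem_cells _ |>.1 hc)
    simp only [Finset.mem_product, Finset.mem_range]
    rw [Set.mem_setOf_eq] at hlam
    omega
  exact Set.Finite.subset (Set.Finite.preimage (cells_injective.injOn)
    (Finset.finite_toSet _)) h

lemma chainSet_mono {μ ν : YoungDiagram} {k : ℕ} {f : Fin (k+1) → YoungDiagram}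
    (hf : f ∈ ChainSet μ ν k) : Monotone f :=
  Fin.monotone_iff_le_succ.2 fun i => (hf.2.2 i).1

lemma chainSet_finite (μ ν : YoungDiagram) (k : ℕ) : (ChainSet μ ν k).Finite := by
  have h : ChainSet μ ν k ⊆ Set.pi Set.univ (fun _ : Fin (k+1) => {σ : YoungDiagram | σ ≤ ν}) := by
    intro f hf i _
    have := chainSet_mono hf (Fin.le_last i)
    rw [hf.2.1] at this
    exact this
  exact Set.Finite.subset (Set.Finite.pi fun _ => finite_le ν) h


noncomputable def Yn (n : ℕ) : Finset YoungDiagram := (finite_card n).toFinset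
lemma mem_Yn {n : ℕ} {lam : YoungDiagram} : lam ∈ Yn n ↔ lam.card = n :=
  Set.Finite.mem_toFinset _
noncomputable def cvdF (l : YoungDiagram) : Finset YoungDiagram :=
  (Yn (l.card - 1)).filter (fun ν => ν ≤ l)
lemma mem_cvdF {l ν : YoungDiagram} : ν ∈ cvdF l ↔ ν.card = l.card - 1 ∧ ν ≤ l := by
  simp [cvdF, mem_Yn, and_comm]

lemma snoc_mem_chainSet {μ lam ν : YoungDiagram} {k : ℕ} (hk : lam.card = μ.card + (k + 1))
    (hν : ν ∈ cvdF lam) {g : Fin (k+1) → YoungDiagram} (hg : g ∈ ChainSet μ ν k) :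
    Fin.snoc g lam ∈ ChainSet μ lam (k+1) := by
  obtain ⟨hg0, hgl, hgc⟩ := hg
  rw [mem_cvdF] at hν
  refine ⟨?_, Fin.snoc_last _ _, ?_⟩
  · rw [show (0 : Fin (k+2)) = Fin.castSucc (0 : Fin (k+1)) from rfl, Fin.snoc_castSucc, hg0]
  · intro i
    refine Fin.lastCases ?_ ?_ i
    · rw [Fin.succ_last, Fin.snoc_last, Fin.snoc_castSucc, hgl]
      exact ⟨hν.2, by omega⟩
    · intro j
      rw [Fin.succ_castSucc, Fin.snoc_castSucc, Fin.snoc_castSucc]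
      exact hgc j

lemma chain_card_eq (μ lam : YoungDiagram) (k : ℕ) (hk : lam.card = μ.card + (k + 1)) :
    Nat.card (ChainSet μ lam (k+1)) =
      Nat.card (Σ ν : {ν : YoungDiagram // ν ∈ cvdF lam}, ChainSet μ ν.1 k) := by
  refine (Nat.card_congr (Equiv.ofBijective
    (fun p : (Σ ν : {ν : YoungDiagram // ν ∈ cvdF lam}, ChainSet μ ν.1 k) =>
      (⟨Fin.snoc p.2.1 lam, snoc_mem_chainSet hk p.1.2 p.2.2⟩ :
        ChainSet μ lam (k+1))) ⟨?_, ?_⟩)).symm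
  · -- injective
    rintro ⟨⟨ν₁, hν₁⟩, g₁, hg₁⟩ ⟨⟨ν₂, hν₂⟩, g₂, hg₂⟩ h
    have hg : g₁ = g₂ := by
      funext i
      have := congrArg (fun f : {f // f ∈ ChainSet μ lam (k+1)} => f.1 i.castSucc) h
      simpa [Fin.snoc_castSucc] using this
    have e1 := hg₁.2.1
    have e2 := hg₂.2.1
    rw [hg] at e1
    have hν : ν₁ = ν₂ := e1.symm.trans e2
    subst hν; subst hg; rfl
  · -- surjective
    rintro ⟨f, hf0, hfl, hfc⟩
    have hmem : f (Fin.castSucc (Fin.last k)) ∈ cvdF lam := by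
      rw [mem_cvdF]
      have := hfc (Fin.last k)
      rw [Fin.succ_last, hfl] at this
      exact ⟨by omega, this.1⟩
    have hchain : (f ∘ Fin.castSucc) ∈ ChainSet μ (f (Fin.castSucc (Fin.last k))) k := by
      refine ⟨?_, rfl, ?_⟩
      · show f (Fin.castSucc 0) = μ
        rw [show Fin.castSucc (0 : Fin (k+1)) = 0 from rfl, hf0]
      · intro j
        have := hfc j.castSucc
        show f (Fin.castSucc j.castSucc) ≤ f (Fin.castSucc j.succ) ∧ _
        rw [← Fin.succ_castSucc]
        exact this
    refine ⟨⟨⟨f (Fin.castSucc (Fin.last k)), hmem⟩, ⟨f ∘ Fin.castSucc, hchain⟩⟩, ?_⟩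
    apply Subtype.ext
    show Fin.snoc (f ∘ Fin.castSucc) lam = f
    funext i
    refine Fin.lastCases ?_ ?_ i
    · rw [Fin.snoc_last, hfl]
    · intro j
      rw [Fin.snoc_castSucc]
      rfl

noncomputable def covF (ν : YoungDiagram) : Finset YoungDiagram :=
  (Yn (ν.card + 1)).filter (fun l => ν ≤ l)
lemma mem_covF {ν l : YoungDiagram} : l ∈ covF ν ↔ l.card = ν.card + 1 ∧ ν ≤ l := by
  simp [covF, mem_Yn, and_comm]

lemma cover_cells {σ ν : YoungDiagram} (hle : σ ≤ ν) (hcard : ν.card = σ.card + 1) :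
    ∃ c, c ∉ σ.cells ∧ ν.cells = insert c σ.cells := by
  have hsub : σ.cells ⊆ ν.cells := YoungDiagram.cells_subset_iff.2 hle
  have hss : σ.cells ⊂ ν.cells := by
    refine Finset.ssubset_iff_subset_ne.2 ⟨hsub, fun h => ?_⟩
    rw [YoungDiagram.card, YoungDiagram.card, h] at hcard
    omega
  obtain ⟨c, hc1, hc2⟩ := Finset.exists_of_ssubset hss
  refine ⟨c, hc2, ?_⟩
  refine (Finset.eq_of_subset_of_card_le (Finset.insert_subset hc1 hsub) ?_).symm
  rw [Finset.card_insert_of_notMem hc2]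
  exact le_of_eq hcard

/-- The diagram obtained by adding a box at the end of row `i`. -/
noncomputable def addBox (ν : YoungDiagram) (i : ℕ)
    (h : i = 0 ∨ ν.rowLen i < ν.rowLen (i-1)) : YoungDiagram where
  cells := insert (i, ν.rowLen i) ν.cells
  isLowerSet := by
    rw [Finset.coe_insert]
    rintro ⟨a, b⟩ ⟨x, y⟩ hxy hmem
    rcases hmem with ⟨rfl, rfl⟩ | hmem
    · rcases eq_or_ne (x, y) (i, ν.rowLen i) with h' | h'
      · exact Or.inl h'
      · right
        obtain ⟨ha, hb⟩ : x ≤ i ∧ y ≤ ν.rowLen i := hxy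
        show (x, y) ∈ (↑ν.cells : Set (ℕ × ℕ))
        rw [Finset.mem_coe, YoungDiagram.mem_cells, YoungDiagram.mem_iff_lt_rowLen]
        rcases lt_or_eq_of_le ha with hlt | hEq
        · rcases h with rfl | h
          · omega
          · have : ν.rowLen (i - 1) ≤ ν.rowLen x := ν.rowLen_anti x (i-1) (by omega)
            omega
        · subst hEq
          have : y ≠ ν.rowLen x := fun hy => h' (by rw [hy])
          omega
    · exact Or.inr (ν.isLowerSet hxy hmem)

lemma addBox_card (ν : YoungDiagram) (i : ℕ) (h : i = 0 ∨ ν.rowLen i < ν.rowLen (i-1)) :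
    (addBox ν i h).card = ν.card + 1 := by
  have hni : (i, ν.rowLen i) ∉ ν.cells := by
    rw [YoungDiagram.mem_cells, YoungDiagram.mem_iff_lt_rowLen]
    omega
  rw [YoungDiagram.card, addBox, Finset.card_insert_of_notMem hni]

lemma le_addBox (ν : YoungDiagram) (i : ℕ) (h : i = 0 ∨ ν.rowLen i < ν.rowLen (i-1)) :
    ν ≤ addBox ν i h :=
  YoungDiagram.cells_subset_iff.1 (Finset.subset_insert _ _)

lemma addBox_mem_covF (ν : YoungDiagram) (i : ℕ) (h : i = 0 ∨ ν.rowLen i < ν.rowLen (i-1)) :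
    addBox ν i h ∈ covF ν :=
  mem_covF.2 ⟨addBox_card ν i h, le_addBox ν i h⟩

/-- The diagram obtained by removing the last box of row `i`. -/
noncomputable def remBox (ν : YoungDiagram) (i : ℕ)
    (h : ν.rowLen (i+1) < ν.rowLen i) : YoungDiagram where
  cells := ν.cells.erase (i, ν.rowLen i - 1)
  isLowerSet := by
    rintro ⟨a, b⟩ ⟨x, y⟩ hxy hmem
    rw [Finset.coe_erase, Set.mem_diff] at hmem ⊢
    obtain ⟨hab, hne⟩ := hmem
    obtain ⟨hx, hy⟩ : x ≤ a ∧ y ≤ b := id hxy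
    have hab' : (a, b) ∈ ν := hab
    have hxy' : (x, y) ∈ ν := ν.isLowerSet hxy hab'
    refine ⟨hxy', ?_⟩
    simp only [Set.mem_singleton_iff, Prod.mk.injEq, not_and] at hne ⊢
    rintro rfl rfl
    -- now (a,b) ≥ (x,y) = (i, rowLen i - 1), (a,b) ∈ ν, (a,b) ≠ (i, rowLen i -1)
    have hblt : b < ν.rowLen a := YoungDiagram.mem_iff_lt_rowLen.1 hab'
    rcases lt_or_eq_of_le hx with hlt | rfl
    · have : ν.rowLen a ≤ ν.rowLen (x+1) := ν.rowLen_anti (x+1) a (by omega)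
      omega
    · have := hne rfl
      omega
lemma remBox_card (ν : YoungDiagram) (i : ℕ) (h : ν.rowLen (i+1) < ν.rowLen i) :
    (remBox ν i h).card = ν.card - 1 := by
  have hmem : (i, ν.rowLen i - 1) ∈ ν.cells := by
    rw [YoungDiagram.mem_cells, YoungDiagram.mem_iff_lt_rowLen]
    omega
  rw [YoungDiagram.card, remBox, Finset.card_erase_of_mem hmem]
lemma remBox_mem_cvdF (ν : YoungDiagram) (i : ℕ) (h : ν.rowLen (i+1) < ν.rowLen i) :
    remBox ν i h ∈ cvdF ν := by
  refine mem_cvdF.2 ⟨remBox_card ν i h, ?_⟩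
  exact YoungDiagram.cells_subset_iff.1 (Finset.erase_subset _ _)

-- Addable row indices and removable row indices
noncomputable def addRows (ν : YoungDiagram) : Finset ℕ :=
  (Finset.range (ν.card + 2)).filter (fun i => i = 0 ∨ ν.rowLen i < ν.rowLen (i-1))
noncomputable def remRows (ν : YoungDiagram) : Finset ℕ :=
  (Finset.range (ν.card + 1)).filter (fun i => ν.rowLen (i+1) < ν.rowLen i)

lemma addRows_card (ν : YoungDiagram) : (addRows ν).card = (remRows ν).card + 1 := by
  have h : addRows ν = insert 0 ((remRows ν).image (· + 1)) := by
    ext i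
    cases i with
    | zero => simp [addRows]
    | succ i =>
      simp only [addRows, remRows, Finset.mem_insert, Finset.mem_image, Finset.mem_filter,
        Finset.mem_range]
      constructor
      · rintro ⟨hb, h0 | hc⟩
        · omega
        · exact Or.inr ⟨i, ⟨by omega, by simpa using hc⟩, rfl⟩
      · rintro (h0 | ⟨j, ⟨hb, hc⟩, hj⟩)
        · omega
        · have : j = i := by omega
          subst this
          exact ⟨by omega, Or.inr (by simpa using hc)⟩
  rw [h, Finset.card_insert_of_notMem (by simp), Finset.card_image_of_injective _
    (fun a b hab => by omega)]

lemma cover_structure {ν l : YoungDiagram} (hl : l ∈ covF ν) :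
    ∃ i, ∃ (h : i = 0 ∨ ν.rowLen i < ν.rowLen (i-1)), i ∈ addRows ν ∧ l = addBox ν i h := by
  rw [mem_covF] at hl
  obtain ⟨c, hc, hcells⟩ := cover_cells hl.2 hl.1
  obtain ⟨i, j⟩ := c
  have hjge : ν.rowLen i ≤ j := by
    by_contra hcon
    push_neg at hcon
    exact hc ((YoungDiagram.mem_cells _).2 (YoungDiagram.mem_iff_lt_rowLen.2 hcon))
  have hjmem : (i, j) ∈ l := by
    rw [← YoungDiagram.mem_cells, hcells]
    exact Finset.mem_insert_self _ _
  have hjle : j ≤ ν.rowLen i := by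
    rcases Nat.eq_zero_or_pos j with rfl | hj
    · omega
    · have h1 : (i, j-1) ∈ l := l.up_left_mem (le_refl i) (by omega) hjmem
      have h2 : (i, j-1) ∈ ν.cells := by
        have := (YoungDiagram.mem_cells _).2 h1
        rw [hcells] at this
        rcases Finset.mem_insert.1 this with heq | hm
        · exfalso; have : j - 1 = j := (congrArg Prod.snd heq); omega
        · exact hm
      have := YoungDiagram.mem_iff_lt_rowLen.1 ((YoungDiagram.mem_cells _).1 h2)
      omega
  have hj : j = ν.rowLen i := by omega
  have hcond : i = 0 ∨ ν.rowLen i < ν.rowLen (i-1) := by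
    rcases Nat.eq_zero_or_pos i with rfl | hi
    · exact Or.inl rfl
    · right
      have h1 : (i-1, j) ∈ l := l.up_left_mem (by omega) le_rfl hjmem
      have h2 : (i-1, j) ∈ ν.cells := by
        have := (YoungDiagram.mem_cells _).2 h1
        rw [hcells] at this
        rcases Finset.mem_insert.1 this with heq | hm
        · exfalso; have : i - 1 = i := (congrArg Prod.fst heq); omega
        · exact hm
      have := YoungDiagram.mem_iff_lt_rowLen.1 ((YoungDiagram.mem_cells _).1 h2)
      omega
  have hbound : i < ν.card + 2 := by
    rcases hcond with rfl | hcond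
    · omega
    · have h0 : (i-1, 0) ∈ ν := YoungDiagram.mem_iff_lt_rowLen.2 (by omega)
      have := lt_card_of_mem h0
      omega
  refine ⟨i, hcond, Finset.mem_filter.2 ⟨Finset.mem_range.2 hbound, hcond⟩, ?_⟩
  apply cells_injective
  rw [hcells, hj]
  rfl

lemma cvd_structure {ν σ : YoungDiagram} (hσ : σ ∈ cvdF ν) (hc1 : 1 ≤ ν.card) :
    ∃ i, ∃ (h : ν.rowLen (i+1) < ν.rowLen i), i ∈ remRows ν ∧ σ = remBox ν i h := by
  rw [mem_cvdF] at hσ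
  obtain ⟨c, hc, hcells⟩ := cover_cells hσ.2 (by omega)
  obtain ⟨i, j⟩ := c
  have hmemν : (i, j) ∈ ν.cells := by rw [hcells]; exact Finset.mem_insert_self _ _
  have herase : σ.cells = ν.cells.erase (i, j) := by
    rw [hcells, Finset.erase_insert hc]
  have hup : (i, j+1) ∉ ν := by
    intro hmem
    have h2 : (i, j+1) ∈ σ.cells := by
      have := (YoungDiagram.mem_cells _).2 hmem
      rw [hcells] at this
      rcases Finset.mem_insert.1 this with heq | hm
      · exfalso; have : j + 1 = j := (congrArg Prod.snd heq); omega
      · exact hm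
    have h3 : (i, j) ∈ σ := σ.up_left_mem le_rfl (by omega) ((YoungDiagram.mem_cells _).1 h2)
    exact hc ((YoungDiagram.mem_cells _).1 h3)
  have hright : (i+1, j) ∉ ν := by
    intro hmem
    have h2 : (i+1, j) ∈ σ.cells := by
      have := (YoungDiagram.mem_cells _).2 hmem
      rw [hcells] at this
      rcases Finset.mem_insert.1 this with heq | hm
      · exfalso; have : i + 1 = i := (congrArg Prod.fst heq); omega
      · exact hm
    have h3 : (i, j) ∈ σ := σ.up_left_mem (by omega) le_rfl ((YoungDiagram.mem_cells _).1 h2)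
    exact hc ((YoungDiagram.mem_cells _).1 h3)
  have hjlt : j < ν.rowLen i := YoungDiagram.mem_iff_lt_rowLen.1 ((YoungDiagram.mem_cells _).1 hmemν)
  have hjge : ν.rowLen i ≤ j + 1 := by
    by_contra hcon
    push_neg at hcon
    exact hup (YoungDiagram.mem_iff_lt_rowLen.2 (by omega))
  have hr1 : ν.rowLen (i+1) ≤ j := by
    by_contra hcon
    push_neg at hcon
    exact hright (YoungDiagram.mem_iff_lt_rowLen.2 (by omega))
  have hcond : ν.rowLen (i+1) < ν.rowLen i := by omega
  have hbound : i < ν.card + 1 := by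
    have := lt_card_of_mem ((YoungDiagram.mem_cells _).1 hmemν)
    omega
  refine ⟨i, hcond, Finset.mem_filter.2 ⟨Finset.mem_range.2 hbound, hcond⟩, ?_⟩
  apply cells_injective
  rw [herase]
  have : j = ν.rowLen i - 1 := by omega
  subst this
  rfl

lemma covF_card (ν : YoungDiagram) : (covF ν).card = (addRows ν).card := by
  refine (Finset.card_bij (fun i hi => addBox ν i (Finset.mem_filter.1 hi).2) ?_ ?_ ?_).symm
  · intro a ha
    exact addBox_mem_covF ν a (Finset.mem_filter.1 ha).2
  · intro a ha b hb hab
    have := congrArg YoungDiagram.cells hab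
    simp only [addBox] at this
    have hmem : ((a, ν.rowLen a) : ℕ × ℕ) ∈ insert (b, ν.rowLen b) ν.cells := by
      rw [← this]; exact Finset.mem_insert_self _ _
    rcases Finset.mem_insert.1 hmem with heq | hm
    · exact congrArg Prod.fst heq
    · exfalso
      have := YoungDiagram.mem_iff_lt_rowLen.1 ((YoungDiagram.mem_cells _).1 hm)
      omega
  · intro l hl
    obtain ⟨i, h, hi, hrest⟩ := cover_structure hl
    exact ⟨i, hi, hrest.symm⟩

lemma cvdF_card (ν : YoungDiagram) (h1 : 1 ≤ ν.card) :
    (cvdF ν).card = (remRows ν).card := by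
  refine (Finset.card_bij (fun i hi => remBox ν i (Finset.mem_filter.1 hi).2) ?_ ?_ ?_).symm
  · intro a ha
    exact remBox_mem_cvdF ν a (Finset.mem_filter.1 ha).2
  · intro a ha b hb hab
    have hacond := (Finset.mem_filter.1 ha).2
    have := congrArg YoungDiagram.cells hab
    simp only [remBox] at this
    by_contra hne
    have hmem2 : ((a, ν.rowLen a - 1) : ℕ × ℕ) ∈ ν.cells := by
      rw [YoungDiagram.mem_cells, YoungDiagram.mem_iff_lt_rowLen]; omega
    have hmem3 : ((a, ν.rowLen a - 1) : ℕ × ℕ) ∈ ν.cells.erase (b, ν.rowLen b - 1) :=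
      Finset.mem_erase.2 ⟨fun heq => hne (congrArg Prod.fst heq), hmem2⟩
    rw [← this] at hmem3
    exact (Finset.mem_erase.1 hmem3).1 rfl
  · intro σ hσ
    obtain ⟨i, h, hi, hrest⟩ := cvd_structure hσ h1
    exact ⟨i, hi, hrest.symm⟩

lemma covF_card_eq (ν : YoungDiagram) (h1 : 1 ≤ ν.card) :
    (covF ν).card = (cvdF ν).card + 1 := by
  rw [covF_card, cvdF_card ν h1, addRows_card]

lemma eq_bot_of_card_eq_zero {ν : YoungDiagram} (h : ν.card = 0) : ν = ⊥ := by
  apply cells_injective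
  rw [YoungDiagram.cells_bot]
  exact Finset.card_eq_zero.1 h

lemma eq_of_le_of_card_le {ν ρ : YoungDiagram} (h : ν ≤ ρ) (hc : ρ.card ≤ ν.card) : ν = ρ :=
  cells_injective (Finset.eq_of_subset_of_card_le (YoungDiagram.cells_subset_iff.2 h) hc)

lemma common_cover_card {ν ρ : YoungDiagram} (hne : ν ≠ ρ) (hcard : ν.card = ρ.card) :
    (covF ν ∩ covF ρ).card = (cvdF ν ∩ cvdF ρ).card := by
  set n := ν.card with hn
  have hνc : ν.cells.card = n := rfl
  have hρc : ρ.cells.card = n := hcard.symm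
  have hn1 : 1 ≤ n := by
    by_contra hcon
    push_neg at hcon
    have h0 : ν.card = 0 := by omega
    have h0' : ρ.card = 0 := by omega
    exact hne ((eq_bot_of_card_eq_zero h0).trans (eq_bot_of_card_eq_zero h0').symm)
  -- upper set structure
  have hup : ∀ l ∈ covF ν ∩ covF ρ, l.cells = ν.cells ∪ ρ.cells := by
    intro l hl
    obtain ⟨hl1, hl2⟩ := Finset.mem_inter.1 hl
    rw [mem_covF] at hl1 hl2
    have hsub : ν.cells ∪ ρ.cells ⊆ l.cells :=
      Finset.union_subset (YoungDiagram.cells_subset_iff.2 hl1.2)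
        (YoungDiagram.cells_subset_iff.2 hl2.2)
    have hcard2 : n + 1 ≤ (ν.cells ∪ ρ.cells).card := by
      by_contra hcon
      push_neg at hcon
      have h1 : (ν.cells ∪ ρ.cells).card ≤ n := by omega
      have h2 : ν.cells = ν.cells ∪ ρ.cells :=
        Finset.eq_of_subset_of_card_le Finset.subset_union_left h1
      have h3 : ρ ≤ ν := YoungDiagram.cells_subset_iff.1 (h2 ▸ Finset.subset_union_right)
      exact hne (eq_of_le_of_card_le h3 (by omega)).symm
    exact (Finset.eq_of_subset_of_card_le hsub
      (by have hlc : l.cells.card = ν.card + 1 := hl1.1; omega)).symm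
  have hdown : ∀ σ ∈ cvdF ν ∩ cvdF ρ, σ.cells = ν.cells ∩ ρ.cells := by
    intro σ hσ
    obtain ⟨h1, h2⟩ := Finset.mem_inter.1 hσ
    rw [mem_cvdF] at h1 h2
    have hsub : σ.cells ⊆ ν.cells ∩ ρ.cells :=
      Finset.subset_inter (YoungDiagram.cells_subset_iff.2 h1.2)
        (YoungDiagram.cells_subset_iff.2 h2.2)
    have hcard2 : (ν.cells ∩ ρ.cells).card ≤ n - 1 := by
      by_contra hcon
      push_neg at hcon
      have hc1 : n ≤ (ν.cells ∩ ρ.cells).card := by omega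
      have h3 : ν.cells ∩ ρ.cells = ν.cells :=
        Finset.eq_of_subset_of_card_le Finset.inter_subset_left (by omega)
      have h4 : ν ≤ ρ := YoungDiagram.cells_subset_iff.1 (h3 ▸ Finset.inter_subset_right)
      exact hne (eq_of_le_of_card_le h4 (by omega))
    exact Finset.eq_of_subset_of_card_le hsub
      (by have : σ.cells.card = ν.card - 1 := h1.1; omega)
  -- subsingletons
  have hsub1 : (covF ν ∩ covF ρ).card ≤ 1 := by
    refine Finset.card_le_one.2 fun a ha b hb => ?_
    exact cells_injective ((hup a ha).trans (hup b hb).symm)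
  have hsub2 : (cvdF ν ∩ cvdF ρ).card ≤ 1 := by
    refine Finset.card_le_one.2 fun a ha b hb => ?_
    exact cells_injective ((hdown a ha).trans (hdown b hb).symm)
  -- nonempty iff
  have hiff : (covF ν ∩ covF ρ).Nonempty ↔ (cvdF ν ∩ cvdF ρ).Nonempty := by
    have hkey : (ν.cells ∪ ρ.cells).card + (ν.cells ∩ ρ.cells).card = n + n := by
      rw [Finset.card_union_add_card_inter]
      omega
    constructor
    · rintro ⟨l, hl⟩
      have h1 := hup l hl
      have hl1 := (mem_covF.1 (Finset.mem_inter.1 hl).1).1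
      have hcu : (ν.cells ∪ ρ.cells).card = n + 1 := by
        rw [← h1]
        have : l.cells.card = ν.card + 1 := hl1
        omega
      have hci : (ν.cells ∩ ρ.cells).card = n - 1 := by omega
      refine ⟨ν ⊓ ρ, Finset.mem_inter.2 ⟨mem_cvdF.2 ⟨?_, inf_le_left⟩,
        mem_cvdF.2 ⟨?_, inf_le_right⟩⟩⟩
      · show (ν ⊓ ρ).cells.card = ν.card - 1
        rw [YoungDiagram.cells_inf, hci]
      · show (ν ⊓ ρ).cells.card = ρ.card - 1
        rw [YoungDiagram.cells_inf, hci]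
        omega
    · rintro ⟨σ, hσ⟩
      have h1 := hdown σ hσ
      have hσ1 := (mem_cvdF.1 (Finset.mem_inter.1 hσ).1).1
      have hci : (ν.cells ∩ ρ.cells).card = n - 1 := by
        rw [← h1]
        have : σ.cells.card = ν.card - 1 := hσ1
        omega
      have hcu : (ν.cells ∪ ρ.cells).card = n + 1 := by omega
      refine ⟨ν ⊔ ρ, Finset.mem_inter.2 ⟨mem_covF.2 ⟨?_, le_sup_left⟩,
        mem_covF.2 ⟨?_, le_sup_right⟩⟩⟩
      · show (ν ⊔ ρ).cells.card = ν.card + 1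
        rw [YoungDiagram.cells_sup, hcu]
      · show (ν ⊔ ρ).cells.card = ρ.card + 1
        rw [YoungDiagram.cells_sup, hcu]
        omega
  rcases (covF ν ∩ covF ρ).eq_empty_or_nonempty with he | hne2
  · rw [he]
    have : cvdF ν ∩ cvdF ρ = ∅ := by
      rw [← Finset.not_nonempty_iff_eq_empty]
      rw [← hiff]
      simp [he]
    rw [this]
  · have h2 := hiff.1 hne2
    have c1 : 1 ≤ (covF ν ∩ covF ρ).card := Finset.card_pos.2 hne2
    have c2 : 1 ≤ (cvdF ν ∩ cvdF ρ).card := Finset.card_pos.2 h2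
    omega

lemma nat_card_sigma {ι : Type} [Fintype ι] (β : ι → Type) [∀ i, Finite (β i)] :
    Nat.card (Σ i, β i) = ∑ i, Nat.card (β i) := by
  haveI := fun i => Fintype.ofFinite (β i)
  simp [Nat.card_eq_fintype_card, Fintype.card_sigma]

lemma card_bot : (⊥ : YoungDiagram).card = 0 := by
  rw [YoungDiagram.card, YoungDiagram.cells_bot]
  rfl

lemma dimSkew_self (μ : YoungDiagram) : dimSkew μ μ = 1 := by
  rw [dimSkew_eq_chainSet μ μ 0 (by omega)]
  have h : ChainSet μ μ 0 = {fun _ => μ} := by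
    ext f
    constructor
    · rintro ⟨h1, -, -⟩
      funext i
      induction i using Fin.cases with
      | zero => exact h1
      | succ j => exact j.elim0
    · rintro rfl
      exact ⟨rfl, rfl, fun i => i.elim0⟩
  rw [h, Nat.card_eq_one_iff_unique]
  exact ⟨Set.subsingleton_singleton.coe_sort, (Set.singleton_nonempty _).to_subtype⟩

lemma dimSkew_of_ne {μ ν : YoungDiagram} (h : ν.card ≤ μ.card) (hne : ν ≠ μ) :
    dimSkew μ ν = 0 := by
  rw [dimSkew_eq_chainSet μ ν 0 (by omega)]
  haveI : IsEmpty ↥(ChainSet μ ν 0) := by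
    refine Set.isEmpty_coe_sort.2 (Set.eq_empty_iff_forall_notMem.2 ?_)
    rintro f ⟨h1, h2, -⟩
    exact hne (by rw [← h1, ← h2]; rfl)
  exact Nat.card_of_isEmpty

lemma dimSkew_rec (μ lam : YoungDiagram) (h : μ.card < lam.card) :
    dimSkew μ lam = ∑ ν ∈ cvdF lam, dimSkew μ ν := by
  set k := lam.card - μ.card - 1 with hkdef
  have hk : lam.card = μ.card + (k + 1) := by omega
  rw [dimSkew_eq_chainSet μ lam (k+1) (by omega), chain_card_eq μ lam k hk]
  haveI : ∀ ν : {ν : YoungDiagram // ν ∈ cvdF lam}, Finite (ChainSet μ ν.1 k) :=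
    fun ν => (chainSet_finite _ _ _).to_subtype
  rw [nat_card_sigma]
  rw [Finset.sum_coe_sort (cvdF lam) (fun ν => Nat.card (ChainSet μ ν k))]
  refine Finset.sum_congr rfl fun ν hν => ?_
  have hc := (mem_cvdF.1 hν).1
  exact (dimSkew_eq_chainSet μ ν k (by omega)).symm

lemma dimSYT_bot : dimSYT ⊥ = 1 := dimSkew_self ⊥

lemma sum_covF : ∀ n (ν : YoungDiagram), ν.card = n →
    ∑ l ∈ covF ν, dimSYT l = (n + 1) * dimSYT ν := by
  intro n
  induction n using Nat.strong_induction_on with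
  | _ n IH =>
    intro ν hν
    rcases Nat.eq_zero_or_pos n with rfl | hn1
    · -- base case : ν = ⊥
      have hb : ν = ⊥ := eq_bot_of_card_eq_zero hν
      subst hb
      have hB : ∀ l ∈ covF (⊥ : YoungDiagram), dimSYT l = 1 := by
        intro l hl
        rw [mem_covF, card_bot] at hl
        have hrec := dimSkew_rec ⊥ l (by rw [card_bot]; omega)
        have hcvd : cvdF l = {⊥} := by
          ext ρ
          rw [mem_cvdF, Finset.mem_singleton, hl.1]
          constructor
          · rintro ⟨h1, -⟩
            exact eq_bot_of_card_eq_zero (by omega)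
          · rintro rfl
            exact ⟨by rw [card_bot], bot_le⟩
        rw [dimSYT, hrec, hcvd, Finset.sum_singleton, dimSkew_self]
      rw [Finset.sum_congr rfl hB, Finset.sum_const, smul_eq_mul, mul_one, covF_card,
        dimSYT_bot, mul_one]
      -- (addRows ⊥).card = 1
      have hr0 : ∀ i, (⊥ : YoungDiagram).rowLen i = 0 := by
        intro i
        by_contra hcon
        exact YoungDiagram.notMem_bot (i, 0)
          (YoungDiagram.mem_iff_lt_rowLen.2 (by omega))
      have : addRows (⊥ : YoungDiagram) = {0} := by
        ext i
        simp only [addRows, Finset.mem_filter, Finset.mem_range, Finset.mem_singleton]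
        constructor
        · rintro ⟨hb, h0 | hc⟩
          · exact h0
          · rw [hr0, hr0] at hc
            omega
        · rintro rfl
          exact ⟨by omega, Or.inl rfl⟩
      rw [this]
      rfl
    · -- inductive step
      have hstep1 : ∀ l ∈ covF ν, dimSYT l =
          ∑ ρ ∈ Yn n, if ρ ≤ l then dimSYT ρ else 0 := by
        intro l hl
        rw [mem_covF] at hl
        rw [dimSYT, dimSkew_rec ⊥ l (by rw [card_bot]; omega)]
        have : cvdF l = (Yn n).filter (fun ρ => ρ ≤ l) := by
          ext ρ
          rw [mem_cvdF, Finset.mem_filter, mem_Yn, hl.1]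
          constructor
          · rintro ⟨h1, h2⟩; exact ⟨by omega, h2⟩
          · rintro ⟨h1, h2⟩; exact ⟨by omega, h2⟩
        rw [this, Finset.sum_filter]
        rfl
      rw [Finset.sum_congr rfl hstep1, Finset.sum_comm]
      have hstep2 : ∀ ρ ∈ Yn n, (∑ l ∈ covF ν, if ρ ≤ l then dimSYT ρ else 0) =
          (covF ν ∩ covF ρ).card * dimSYT ρ := by
        intro ρ hρ
        rw [mem_Yn] at hρ
        rw [← Finset.sum_filter]
        have : (covF ν).filter (fun l => ρ ≤ l) = covF ν ∩ covF ρ := by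
          ext l
          rw [Finset.mem_filter, Finset.mem_inter, mem_covF, mem_covF]
          constructor
          · rintro ⟨⟨h1a, h1b⟩, h2⟩
            exact ⟨⟨h1a, h1b⟩, ⟨by omega, h2⟩⟩
          · rintro ⟨h1, h2⟩
            exact ⟨h1, h2.2⟩
        rw [this, Finset.sum_const, smul_eq_mul]
      rw [Finset.sum_congr rfl hstep2]
      have hstep3 : ∀ ρ ∈ Yn n, (covF ν ∩ covF ρ).card * dimSYT ρ =
          (cvdF ν ∩ cvdF ρ).card * dimSYT ρ + (if ρ = ν then dimSYT ν else 0) := by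
        intro ρ hρ
        rw [mem_Yn] at hρ
        rcases eq_or_ne ρ ν with rfl | hne
        · rw [Finset.inter_self, Finset.inter_self, if_pos rfl, covF_card_eq ρ (by omega)]
          ring
        · rw [common_cover_card (Ne.symm hne) (by omega), if_neg hne, add_zero]
      rw [Finset.sum_congr rfl hstep3, Finset.sum_add_distrib]
      have hν_mem : ν ∈ Yn n := mem_Yn.2 hν
      rw [Finset.sum_ite_eq' (Yn n) ν (fun _ => dimSYT ν), if_pos hν_mem]
      have hstep4 : ∀ ρ ∈ Yn n, (cvdF ν ∩ cvdF ρ).card * dimSYT ρ =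
          ∑ σ ∈ cvdF ν, if σ ∈ cvdF ρ then dimSYT ρ else 0 := by
        intro ρ hρ
        rw [← Finset.filter_mem_eq_inter, Finset.card_filter, Finset.sum_mul]
        refine Finset.sum_congr rfl fun σ hσ => ?_
        by_cases h : σ ∈ cvdF ρ <;> simp [h]
      rw [Finset.sum_congr rfl hstep4, Finset.sum_comm]
      have hstep5 : ∀ σ ∈ cvdF ν, (∑ ρ ∈ Yn n, if σ ∈ cvdF ρ then dimSYT ρ else 0) =
          n * dimSYT σ := by
        intro σ hσ
        have hσc : σ.card = n - 1 := by
          have := (mem_cvdF.1 hσ).1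
          omega
        rw [← Finset.sum_filter]
        have hfil : (Yn n).filter (fun ρ => σ ∈ cvdF ρ) = covF σ := by
          ext ρ
          rw [Finset.mem_filter, mem_Yn, mem_cvdF, mem_covF]
          constructor
          · rintro ⟨h1, h2, h3⟩
            exact ⟨by omega, h3⟩
          · rintro ⟨h1, h2⟩
            exact ⟨by omega, by omega, h2⟩
        rw [hfil, IH (n-1) (by omega) σ hσc]
        congr 1
        omega
      have hrecν : dimSYT ν = ∑ σ ∈ cvdF ν, dimSYT σ :=
        dimSkew_rec ⊥ ν (by rw [card_bot]; omega)
      rw [Finset.sum_congr rfl hstep5, ← Finset.mul_sum, ← hrecν]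
      ring

lemma sum_dim (μ : YoungDiagram) :
    ∀ k, ∑ lam ∈ Yn (μ.card + k), dimSkew μ lam * dimSYT lam =
      (μ.card + k).descFactorial k * dimSYT μ := by
  intro k
  induction k with
  | zero =>
    rw [Nat.add_zero, Nat.descFactorial_zero, one_mul]
    rw [Finset.sum_eq_single μ]
    · rw [dimSkew_self, one_mul]
    · intro lam hlam hne
      rw [dimSkew_of_ne (le_of_eq (mem_Yn.1 hlam)) hne, zero_mul]
    · intro habs
      exact absurd (mem_Yn.2 rfl) habs
  | succ k IH =>
    have hstep1 : ∀ lam ∈ Yn (μ.card + (k+1)), dimSkew μ lam * dimSYT lam =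
        ∑ ν ∈ Yn (μ.card + k), if ν ≤ lam then dimSkew μ ν * dimSYT lam else 0 := by
      intro lam hlam
      rw [mem_Yn] at hlam
      rw [dimSkew_rec μ lam (by omega)]
      have : cvdF lam = (Yn (μ.card + k)).filter (fun ν => ν ≤ lam) := by
        ext ν
        rw [mem_cvdF, Finset.mem_filter, mem_Yn]
        constructor
        · rintro ⟨h1, h2⟩; exact ⟨by omega, h2⟩
        · rintro ⟨h1, h2⟩; exact ⟨by omega, h2⟩
      rw [this, Finset.sum_filter, Finset.sum_mul]
      refine Finset.sum_congr rfl fun ν hν => ?_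
      by_cases h : ν ≤ lam <;> simp [h]
    rw [Finset.sum_congr rfl hstep1, Finset.sum_comm]
    have hstep2 : ∀ ν ∈ Yn (μ.card + k),
        (∑ lam ∈ Yn (μ.card + (k+1)), if ν ≤ lam then dimSkew μ ν * dimSYT lam else 0) =
        dimSkew μ ν * ((μ.card + k + 1) * dimSYT ν) := by
      intro ν hν
      rw [mem_Yn] at hν
      rw [← Finset.sum_filter]
      have hfil : (Yn (μ.card + (k+1))).filter (fun lam => ν ≤ lam) = covF ν := by
        ext lam
        rw [Finset.mem_filter, mem_Yn, mem_covF]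
        constructor
        · rintro ⟨h1, h2⟩; exact ⟨by omega, h2⟩
        · rintro ⟨h1, h2⟩; exact ⟨by omega, h2⟩
      rw [hfil, ← Finset.mul_sum, sum_covF (μ.card + k) ν hν]
    rw [Finset.sum_congr rfl hstep2]
    have : ∀ ν ∈ Yn (μ.card + k), dimSkew μ ν * ((μ.card + k + 1) * dimSYT ν) =
        (μ.card + k + 1) * (dimSkew μ ν * dimSYT ν) := fun ν _ => by ring
    rw [Finset.sum_congr rfl this, ← Finset.mul_sum, IH]
    rw [show μ.card + (k + 1) = (μ.card + k) + 1 by omega, Nat.succ_descFactorial_succ]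
    ring

end PlanchAux

open PlanchAux in
/-- The Plancherel average of `F_μ(λ) = |λ|^{↓m} · dim(μ,λ)/dim λ` equals
`C(n,m) · dim μ`, where `m = |μ|`. -/
theorem plancherel_average_F_mu (μ : YoungDiagram) (n : ℕ) :
    plancherelAvg n
      (fun lam => (lam.card.descFactorial μ.card : ℝ) *
        (dimSkew μ lam : ℝ) / (dimSYT lam : ℝ))
      = (n.choose μ.card : ℝ) * (dimSYT μ : ℝ) := by
  rw [plancherelAvg]
  rw [show {lam : YoungDiagram | lam.card = n} = ↑(Yn n) from
    (Set.Finite.coe_toFinset (finite_card n)).symm]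
  rw [finsum_mem_coe_finset]
  have hterm : ∀ lam ∈ Yn n,
      ((lam.card.descFactorial μ.card : ℝ) * (dimSkew μ lam : ℝ) / (dimSYT lam : ℝ)) *
        ((dimSYT lam : ℝ) ^ 2 / (n.factorial : ℝ)) =
      ((n.descFactorial μ.card : ℝ) / (n.factorial : ℝ)) *
        ((dimSkew μ lam * dimSYT lam : ℕ) : ℝ) := by
    intro lam hlam
    rw [mem_Yn] at hlam
    rw [hlam]
    push_cast
    rcases eq_or_ne ((dimSYT lam : ℝ)) 0 with h0 | h0
    · simp [h0]
    · field_simp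
  rw [Finset.sum_congr rfl hterm, ← Finset.mul_sum, ← Nat.cast_sum]
  rcases lt_or_ge n μ.card with hlt | hge
  · rw [Nat.descFactorial_eq_zero_iff_lt.2 hlt, Nat.choose_eq_zero_of_lt hlt]
    simp
  · obtain ⟨k, rfl⟩ : ∃ k, n = μ.card + k := ⟨n - μ.card, by omega⟩
    rw [sum_dim μ k]
    have hkey : (μ.card + k).descFactorial μ.card * ((μ.card + k).descFactorial k) =
        (μ.card + k).factorial * (μ.card + k).choose μ.card := by
      rw [Nat.descFactorial_eq_factorial_mul_choose, Nat.descFactorial_eq_factorial_mul_choose]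
      have h2 := Nat.add_choose_mul_factorial_mul_factorial μ.card k
      have hsymm : (μ.card + k).choose μ.card = (μ.card + k).choose k := Nat.choose_symm_add
      rw [hsymm, ← h2]
      ring
    have hkeyR : ((μ.card + k).descFactorial μ.card : ℝ) * ((μ.card + k).descFactorial k : ℝ) =
        ((μ.card + k).factorial : ℝ) * ((μ.card + k).choose μ.card : ℝ) := by
      exact_mod_cast congrArg (Nat.cast : ℕ → ℝ) hkey
    have hfact : ((μ.card + k).factorial : ℝ) ≠ 0 :=
      Nat.cast_ne_zero.2 (Nat.factorial_ne_zero _)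
    push_cast
    field_simp
    linear_combination (dimSYT μ : ℝ) * hkeyR
end

section
/- For every Young diagram λ, the identity Φ(u − 1/2; λ) = Π_{i=1}^{d(λ)} (u + b_i)/(u − a_i) holds as an identity of rational functions in u; explicitly, Π_{i=1}^{ℓ(λ)} (u − 1/2 + i)/(u − 1/2 − λ_i + i) = Π_{i=1}^{d(λ)} (u + b_i)/(u − a_i). -/
set_option maxHeartbeats 2000000


open scoped BigOperators Classical

/-- Number of diagonal boxes `d(λ)`. -/
def dDiag (lam : YoungDiagram) : ℕ :=
  ((Finset.range (lam.colLen 0)).filter fun i => i < lam.rowLen i).card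

/-- Modified Frobenius coordinate `a_{i+1} = λ_{i+1} - (i+1) + 1/2` (zero-based `i`). -/
noncomputable def aFrob (lam : YoungDiagram) (i : ℕ) : ℝ :=
  (lam.rowLen i : ℝ) - ((i : ℝ) + 1) + 1 / 2

/-- Modified Frobenius coordinate `b_{i+1} = λ′_{i+1} - (i+1) + 1/2` (zero-based `i`). -/
noncomputable def bFrob (lam : YoungDiagram) (i : ℕ) : ℝ :=
  (lam.colLen i : ℝ) - ((i : ℝ) + 1) + 1 / 2

/-- A downward-closed finset of naturals is an initial segment. -/
lemma lower_finset_eq_range (S : Finset ℕ) (h : ∀ j i : ℕ, j ≤ i → i ∈ S → j ∈ S) :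
    S = Finset.range S.card := by
  ext k
  simp only [Finset.mem_range]
  constructor
  · intro hk
    have hsub : Finset.range (k + 1) ⊆ S := by
      intro j hj
      exact h j k (Nat.lt_succ_iff.mp (Finset.mem_range.mp hj)) hk
    have := Finset.card_le_card hsub
    simpa using this
  · intro hk
    by_contra hks
    have hsub : S ⊆ Finset.range k := by
      intro i hi
      rw [Finset.mem_range]
      by_contra hik
      exact hks (h k i (le_of_not_gt hik) hi)
    have := Finset.card_le_card hsub
    simp only [Finset.card_range] at this
    omega

lemma diag_iff_row (lam : YoungDiagram) (i : ℕ) : i < lam.rowLen i ↔ i < dDiag lam := by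
  set S := (Finset.range (lam.colLen 0)).filter fun i => i < lam.rowLen i with hS
  have hlow : ∀ j i : ℕ, j ≤ i → i ∈ S → j ∈ S := by
    intro j i hji hi
    simp only [hS, Finset.mem_filter, Finset.mem_range] at hi ⊢
    refine ⟨lt_of_le_of_lt hji hi.1, ?_⟩
    exact lt_of_le_of_lt hji (lt_of_lt_of_le hi.2 (lam.rowLen_anti j i hji))
  have hrange : S = Finset.range (dDiag lam) := lower_finset_eq_range S hlow
  constructor
  · intro h
    have hmem : i ∈ S := by
      simp only [hS, Finset.mem_filter, Finset.mem_range]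
      refine ⟨?_, h⟩
      rw [← YoungDiagram.mem_iff_lt_colLen]
      rw [YoungDiagram.mem_iff_lt_rowLen]
      omega
    rw [hrange, Finset.mem_range] at hmem
    exact hmem
  · intro h
    have hmem : i ∈ S := by rw [hrange, Finset.mem_range]; exact h
    simp only [hS, Finset.mem_filter] at hmem
    exact hmem.2

lemma diag_iff_col (lam : YoungDiagram) (i : ℕ) : i < lam.colLen i ↔ i < dDiag lam := by
  rw [← YoungDiagram.mem_iff_lt_colLen, YoungDiagram.mem_iff_lt_rowLen]
  exact diag_iff_row lam i

/-- `Φ(u - 1/2; λ) = ∏_{i=1}^{d(λ)} (u + b_i)/(u - a_i)` as rational functions in `u`,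
i.e. the identity holds for every `u` where both sides are defined. -/
theorem char_fun_eq_frobenius_product (lam : YoungDiagram) (u : ℝ)
    (h1 : ∀ i < lam.colLen 0, u - 1 / 2 - (lam.rowLen i : ℝ) + ((i : ℝ) + 1) ≠ 0)
    (h2 : ∀ i < dDiag lam, u - aFrob lam i ≠ 0) :
    ∏ i ∈ Finset.range (lam.colLen 0),
        (u - 1 / 2 + ((i : ℝ) + 1)) / (u - 1 / 2 - (lam.rowLen i : ℝ) + ((i : ℝ) + 1))
      = ∏ i ∈ Finset.range (dDiag lam), (u + bFrob lam i) / (u - aFrob lam i) := by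
  classical
  set n := lam.colLen 0 with hn
  set d := dDiag lam with hdd
  have hrow : ∀ i, i < lam.rowLen i ↔ i < d := diag_iff_row lam
  have hcol : ∀ i, i < lam.colLen i ↔ i < d := diag_iff_col lam
  have hdn : d ≤ n := by
    have := Finset.card_filter_le (Finset.range n) (fun i => i < lam.rowLen i)
    simpa [hdd, dDiag, hn] using this
  have hpos : ∀ i, i < n → 1 ≤ lam.rowLen i := by
    intro i hi
    have : (i, 0) ∈ lam := YoungDiagram.mem_iff_lt_colLen.mpr hi
    exact YoungDiagram.mem_iff_lt_rowLen.mp this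
  have hcolle : ∀ i, lam.colLen i ≤ n := fun i => lam.colLen_anti 0 i (Nat.zero_le i)
  set ψ : ℕ → ℕ := fun i => if i < d then lam.colLen i - i - 1 else i - lam.rowLen i with hψ
  -- the cross non-collision fact
  have cross : ∀ i j : ℕ, ¬ i < lam.rowLen i → j < d →
      i - lam.rowLen i ≠ lam.colLen j - j - 1 := by
    intro i j hi hj heq
    have hji : j < lam.colLen j := (hcol j).mpr hj
    have hri : lam.rowLen i ≤ i := le_of_not_gt hi
    by_cases hmem : (i, j) ∈ lam
    · have h1' : j < lam.rowLen i := YoungDiagram.mem_iff_lt_rowLen.mp hmem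
      have h2' : i < lam.colLen j := YoungDiagram.mem_iff_lt_colLen.mp hmem
      omega
    · have h1' : lam.rowLen i ≤ j :=
        le_of_not_gt fun h => hmem (YoungDiagram.mem_iff_lt_rowLen.mpr h)
      have h2' : lam.colLen j ≤ i :=
        le_of_not_gt fun h => hmem (YoungDiagram.mem_iff_lt_colLen.mpr h)
      omega
  have hinj : Set.InjOn ψ (Finset.range n : Set ℕ) := by
    intro i hi j hj heq
    simp only [Finset.coe_range, Set.mem_Iio] at hi hj
    simp only [hψ] at heq
    split_ifs at heq with hiD hjD hjD
    · have hci : i < lam.colLen i := (hcol i).mpr hiD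
      have hcj : j < lam.colLen j := (hcol j).mpr hjD
      rcases le_total i j with h | h
      · have := lam.colLen_anti i j h
        omega
      · have := lam.colLen_anti j i h
        omega
    · exact absurd heq ((cross j i (fun h => hjD ((hrow j).mp h)) hiD ∘ Eq.symm))
    · exact absurd heq (cross i j (fun h => hiD ((hrow i).mp h)) hjD)
    · have hri : lam.rowLen i ≤ i := le_of_not_gt fun h => hiD ((hrow i).mp h)
      have hrj : lam.rowLen j ≤ j := le_of_not_gt fun h => hjD ((hrow j).mp h)
      have h1i : 1 ≤ lam.rowLen i := hpos i hi
      have h1j : 1 ≤ lam.rowLen j := hpos j hj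
      rcases le_total i j with h | h
      · have := lam.rowLen_anti i j h
        omega
      · have := lam.rowLen_anti j i h
        omega
  have hmaps : ∀ i ∈ Finset.range n, ψ i ∈ Finset.range n := by
    intro i hi
    rw [Finset.mem_range] at hi ⊢
    simp only [hψ]
    split_ifs with h
    · have hci : i < lam.colLen i := (hcol i).mpr h
      have := hcolle i
      omega
    · have := hpos i hi
      omega
  have himg : (Finset.range n).image ψ = Finset.range n := by
    apply Finset.eq_of_subset_of_card_le
    · intro x hx
      rcases Finset.mem_image.mp hx with ⟨i, hi, rfl⟩
      exact hmaps i hi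
    · rw [Finset.card_image_of_injOn hinj]
  -- the key multiset/product identity
  have key : ∏ i ∈ Finset.range n, (u - 1 / 2 + ((i : ℝ) + 1))
      = ∏ i ∈ Finset.range n,
          (if i < d then u + bFrob lam i
           else u - 1 / 2 - (lam.rowLen i : ℝ) + ((i : ℝ) + 1)) := by
    conv_lhs => rw [← himg]
    rw [Finset.prod_image fun i hi j hj => hinj (by simpa using hi) (by simpa using hj)]
    apply Finset.prod_congr rfl
    intro i hi
    rw [Finset.mem_range] at hi
    simp only [hψ]
    split_ifs with h
    · have h1' : i + 1 ≤ lam.colLen i := (hcol i).mpr h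
      have hc : ((lam.colLen i - i - 1 : ℕ) : ℝ) = (lam.colLen i : ℝ) - i - 1 := by
        rw [Nat.sub_sub, Nat.cast_sub h1']
        push_cast
        ring
      rw [hc, bFrob]
      ring
    · have h1' : lam.rowLen i ≤ i := le_of_not_gt fun hh => h ((hrow i).mp hh)
      have hc : ((i - lam.rowLen i : ℕ) : ℝ) = (i : ℝ) - lam.rowLen i := Nat.cast_sub h1'
      rw [hc]
      ring
  have hsplit : n = d + (n - d) := (Nat.add_sub_cancel' hdn).symm
  set T : ℝ :=
    ∏ j ∈ Finset.range (n - d),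
      (u - 1 / 2 - (lam.rowLen (d + j) : ℝ) + (((d + j : ℕ) : ℝ) + 1)) with hT
  have hTne : T ≠ 0 := by
    rw [hT]
    apply Finset.prod_ne_zero_iff.mpr
    intro j hj
    rw [Finset.mem_range] at hj
    exact h1 (d + j) (by omega)
  have hnum : ∏ i ∈ Finset.range n, (u - 1 / 2 + ((i : ℝ) + 1))
      = (∏ i ∈ Finset.range d, (u + bFrob lam i)) * T := by
    rw [key]
    conv_lhs => rw [hsplit]
    rw [Finset.prod_range_add]
    congr 1
    · apply Finset.prod_congr rfl
      intro i hi
      rw [Finset.mem_range] at hi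
      rw [if_pos hi]
    · rw [hT]
      apply Finset.prod_congr rfl
      intro j hj
      rw [if_neg (by omega)]
  have hden : ∏ i ∈ Finset.range n, (u - 1 / 2 - (lam.rowLen i : ℝ) + ((i : ℝ) + 1))
      = (∏ i ∈ Finset.range d, (u - aFrob lam i)) * T := by
    conv_lhs => rw [hsplit]
    rw [Finset.prod_range_add]
    congr 1
    · apply Finset.prod_congr rfl
      intro i hi
      rw [aFrob]
      ring
  rw [Finset.prod_div_distrib, Finset.prod_div_distrib, hnum, hden,
    mul_div_mul_right _ _ hTne]
end

section
/- For every Young diagram λ and every integer m ≥ 1, the super power sum in the modified Frobenius coordinates satisfies Σ_{i=1}^{d(λ)} (a_i^m − (−b_i)^m) = Σ_{k=0}^{⌊(m−1)/2⌋} 2^{−2k} · C(m, 2k+1) · p̂_{m−1−2k}(λ), where C(m, 2k+1) is a binomial coefficient. -/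
open scoped BigOperators Classical

lemma binom_key (m : ℕ) (hm : 1 ≤ m) (x : ℝ) :
    ∑ k ∈ Finset.range ((m - 1) / 2 + 1),
        ((2 : ℝ) ^ (2 * k))⁻¹ * (m.choose (2 * k + 1) : ℝ) * x ^ (m - 1 - 2 * k)
      = (x + 1 / 2) ^ m - (x - 1 / 2) ^ m := by
  have h1 : (x + 1 / 2) ^ m - (x - 1 / 2) ^ m
      = ∑ j ∈ Finset.range (m + 1),
          x ^ j * ((1 / 2 : ℝ) ^ (m - j) - (-(1 / 2) : ℝ) ^ (m - j)) * m.choose j := by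
    have e1 := add_pow x (1 / 2 : ℝ) m
    have e2 := add_pow x (-(1 / 2) : ℝ) m
    rw [show x - 1 / 2 = x + -(1 / 2) by ring, e1, e2, ← Finset.sum_sub_distrib]
    apply Finset.sum_congr rfl
    intro j _
    ring
  have hfil : ∑ j ∈ (Finset.range (m + 1)).filter (fun j => (m - j) % 2 = 1),
        x ^ j * ((1 / 2 : ℝ) ^ (m - j) - (-(1 / 2) : ℝ) ^ (m - j)) * m.choose j
      = ∑ j ∈ Finset.range (m + 1),
        x ^ j * ((1 / 2 : ℝ) ^ (m - j) - (-(1 / 2) : ℝ) ^ (m - j)) * m.choose j := by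
    apply Finset.sum_filter_of_ne
    intro j _ hne
    by_contra hp
    have heven : Even (m - j) := Nat.even_iff.2 (by omega)
    rw [heven.neg_pow] at hne
    simp at hne
  rw [h1, ← hfil]
  apply Finset.sum_nbij' (i := fun k => m - 1 - 2 * k) (j := fun j => (m - 1 - j) / 2)
  · intro k hk
    simp only [Finset.mem_range] at hk
    simp only [Finset.mem_filter, Finset.mem_range]
    omega
  · intro j hj
    simp only [Finset.mem_filter, Finset.mem_range] at hj
    simp only [Finset.mem_range]
    omega
  · intro k hk
    simp only [Finset.mem_range] at hk
    omega
  · intro j hj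
    simp only [Finset.mem_filter, Finset.mem_range] at hj
    omega
  · intro k hk
    simp only [Finset.mem_range] at hk
    have h2k : 2 * k + 1 ≤ m := by omega
    have e1 : m - (m - 1 - 2 * k) = 2 * k + 1 := by omega
    have e2 : m.choose (m - 1 - 2 * k) = m.choose (2 * k + 1) := by
      rw [show m - 1 - 2 * k = m - (2 * k + 1) by omega, Nat.choose_symm h2k]
    rw [e1, e2]
    have hodd : Odd (2 * k + 1) := odd_two_mul_add_one k
    rw [hodd.neg_pow]
    have key2 : ((1 : ℝ) / 2) ^ (2 * k + 1) - -((1 : ℝ) / 2) ^ (2 * k + 1)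
        = ((2 : ℝ) ^ (2 * k))⁻¹ := by
      rw [one_div, inv_pow, pow_succ]
      field_simp
      ring
    rw [key2]
    ring

lemma lt_dDiag_iff (lam : YoungDiagram) (i : ℕ) : i < dDiag lam ↔ i < lam.rowLen i := by
  constructor
  · intro h
    by_contra hc
    push_neg at hc
    have hsub : ((Finset.range (lam.colLen 0)).filter fun i' => i' < lam.rowLen i')
        ⊆ Finset.range i := by
      intro x hx
      simp only [Finset.mem_filter, Finset.mem_range] at hx ⊢
      by_contra hxi
      push_neg at hxi
      have := lam.rowLen_anti i x hxi
      omega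
    have := Finset.card_le_card hsub
    simp only [Finset.card_range] at this
    unfold dDiag at h
    omega
  · intro h
    have hsub : Finset.range (i + 1)
        ⊆ ((Finset.range (lam.colLen 0)).filter fun i' => i' < lam.rowLen i') := by
      intro x hx
      simp only [Finset.mem_range] at hx
      have hx' : x ≤ i := by omega
      have h1 : lam.rowLen i ≤ lam.rowLen x := lam.rowLen_anti x i hx'
      have h2 : x < lam.rowLen x := by omega
      have hmem : (x, x) ∈ lam := YoungDiagram.mem_iff_lt_rowLen.2 h2
      have hmem0 : (x, 0) ∈ lam := lam.up_left_mem le_rfl (Nat.zero_le _) hmem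
      have h3 : x < lam.colLen 0 := YoungDiagram.mem_iff_lt_colLen.1 hmem0
      simp only [Finset.mem_filter, Finset.mem_range]
      exact ⟨h3, h2⟩
    have := Finset.card_le_card hsub
    simp only [Finset.card_range] at this
    unfold dDiag
    omega

/-- The super power sums in the modified Frobenius coordinates expand in the content
power sums: `∑_i (a_i^m - (-b_i)^m) = ∑_k 2^{-2k} C(m,2k+1) p̂_{m-1-2k}(λ)`. -/
theorem super_power_sum_frobenius_eq_content_sum (lam : YoungDiagram) (m : ℕ) (hm : 1 ≤ m) :
    ∑ i ∈ Finset.range (dDiag lam), (aFrob lam i ^ m - (-bFrob lam i) ^ m)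
      = ∑ k ∈ Finset.range ((m - 1) / 2 + 1),
          ((2 : ℝ) ^ (2 * k))⁻¹ * (m.choose (2 * k + 1) : ℝ) * phat (m - 1 - 2 * k) lam := by
  classical
  have hrhs : ∑ k ∈ Finset.range ((m - 1) / 2 + 1),
        ((2 : ℝ) ^ (2 * k))⁻¹ * (m.choose (2 * k + 1) : ℝ) * phat (m - 1 - 2 * k) lam
      = ∑ c ∈ lam.cells,
          ((((c.2 : ℝ) - c.1) + 1 / 2) ^ m - (((c.2 : ℝ) - c.1) - 1 / 2) ^ m) := by
    unfold phat
    simp_rw [Finset.mul_sum]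
    rw [Finset.sum_comm]
    apply Finset.sum_congr rfl
    intro c _
    rw [← binom_key m hm]
  rw [hrhs]
  set g : ℕ × ℕ → ℝ :=
    fun c => (((c.2 : ℝ) - c.1) + 1 / 2) ^ m - (((c.2 : ℝ) - c.1) - 1 / 2) ^ m with hg
  rw [← Finset.sum_filter_add_sum_filter_not lam.cells (fun c => c.1 ≤ c.2) g]
  have hupper : lam.cells.filter (fun c => c.1 ≤ c.2)
      = (Finset.range (dDiag lam)).biUnion
          (fun i => (Finset.Ico i (lam.rowLen i)).image (fun j => (i, j))) := by
    ext ⟨i, j⟩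
    simp only [Finset.mem_filter, YoungDiagram.mem_cells, YoungDiagram.mem_iff_lt_rowLen,
      Finset.mem_biUnion, Finset.mem_range, Finset.mem_image, Finset.mem_Ico,
      lt_dDiag_iff, Prod.mk.injEq]
    constructor
    · rintro ⟨h1, h2⟩
      exact ⟨i, by omega, j, ⟨h2, h1⟩, rfl, rfl⟩
    · rintro ⟨i', hi', j', hj', rfl, rfl⟩
      omega
  have hlower : lam.cells.filter (fun c => ¬ c.1 ≤ c.2)
      = (Finset.range (dDiag lam)).biUnion
          (fun j => (Finset.Ico (j + 1) (lam.colLen j)).image (fun i => (i, j))) := by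
    ext ⟨i, j⟩
    simp only [Finset.mem_filter, YoungDiagram.mem_cells,
      Finset.mem_biUnion, Finset.mem_range, Finset.mem_image, Finset.mem_Ico,
      lt_dDiag_iff, Prod.mk.injEq, not_le]
    constructor
    · rintro ⟨h1, h2⟩
      have hcol : i < lam.colLen j := YoungDiagram.mem_iff_lt_colLen.1 h1
      have hdiag : (j, j) ∈ lam := lam.up_left_mem (by omega) le_rfl h1
      have hd : j < lam.rowLen j := YoungDiagram.mem_iff_lt_rowLen.1 hdiag
      exact ⟨j, hd, i, ⟨by omega, hcol⟩, rfl, rfl⟩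
    · rintro ⟨j', hj', i', hi', rfl, rfl⟩
      exact ⟨YoungDiagram.mem_iff_lt_colLen.2 hi'.2, by omega⟩
  rw [hupper, hlower]
  rw [Finset.sum_biUnion, Finset.sum_biUnion]
  · rw [← Finset.sum_add_distrib]
    apply Finset.sum_congr rfl
    intro i hi
    simp only [Finset.mem_range, lt_dDiag_iff] at hi
    have hrow : ∑ c ∈ (Finset.Ico i (lam.rowLen i)).image (fun j => (i, j)), g c
        = aFrob lam i ^ m - (-(1 / 2 : ℝ)) ^ m := by
      rw [Finset.sum_image (by intro a _ b _ h; simpa using h)]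
      rw [Finset.sum_Ico_eq_sum_range]
      have hterm : ∀ t, g (i, i + t)
          = (((t + 1 : ℕ) : ℝ) - 1 / 2) ^ m - (((t : ℕ) : ℝ) - 1 / 2) ^ m := by
        intro t
        simp only [hg]
        push_cast
        try ring_nf
      rw [Finset.sum_congr rfl (fun t _ => hterm t)]
      rw [Finset.sum_range_sub (fun t : ℕ => (((t : ℕ) : ℝ) - 1 / 2) ^ m)]
      have hle : i ≤ lam.rowLen i := le_of_lt hi
      have hcast : ((lam.rowLen i - i : ℕ) : ℝ) = (lam.rowLen i : ℝ) - i := by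
        push_cast [hle]; ring
      rw [hcast]
      unfold aFrob
      norm_num
      congr 1
      ring
    have hcoldiag : i < lam.colLen i := by
      have hdiag : (i, i) ∈ lam := YoungDiagram.mem_iff_lt_rowLen.2 hi
      exact YoungDiagram.mem_iff_lt_colLen.1 hdiag
    have hcol : ∑ c ∈ (Finset.Ico (i + 1) (lam.colLen i)).image (fun i' => (i', i)), g c
        = (-(1 / 2 : ℝ)) ^ m - (-bFrob lam i) ^ m := by
      rw [Finset.sum_image (by intro a _ b _ h; simpa using h)]
      rw [Finset.sum_Ico_eq_sum_range]
      have hterm : ∀ t, g (i + 1 + t, i)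
          = (-((t : ℕ) : ℝ) - 1 / 2) ^ m - (-((t + 1 : ℕ) : ℝ) - 1 / 2) ^ m := by
        intro t
        simp only [hg]
        push_cast
        try ring_nf
      rw [Finset.sum_congr rfl (fun t _ => hterm t)]
      rw [Finset.sum_range_sub' (fun t : ℕ => (-((t : ℕ) : ℝ) - 1 / 2) ^ m)]
      have hle : i + 1 ≤ lam.colLen i := hcoldiag
      have hcast : ((lam.colLen i - (i + 1) : ℕ) : ℝ) = (lam.colLen i : ℝ) - (i + 1) := by
        push_cast [hle]; ring
      rw [hcast]
      unfold bFrob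
      norm_num
      congr 1
      ring
    rw [hrow, hcol]
    ring
  · intro a _ b _ hab
    simp only [Function.onFun]
    apply Finset.disjoint_left.2
    rintro c hA hB
    simp only [Finset.mem_image] at hA hB
    obtain ⟨x, -, rfl⟩ := hA
    obtain ⟨y, -, hy⟩ := hB
    exact hab (congrArg Prod.snd hy).symm
  · intro a _ b _ hab
    simp only [Function.onFun]
    apply Finset.disjoint_left.2
    rintro c hA hB
    simp only [Finset.mem_image] at hA hB
    obtain ⟨x, -, rfl⟩ := hA
    obtain ⟨y, -, hy⟩ := hB
    exact hab (congrArg Prod.fst hy).symm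
end

section
/- The algebra A of regular functions on Y coincides with the unital ℝ-subalgebra of the algebra of all functions Y → ℝ generated by the content power sums p̂_0, p̂_1, p̂_2, …. That is, the subalgebra generated by {p*_m : m ≥ 1} equals the subalgebra generated by {p̂_r : r ≥ 0} (equivalently, A is generated by the function λ ↦ |λ| together with all functions of the form G_φ(λ) = φ(c_1(λ),…,c_{|λ|}(λ),0,0,…) with φ a symmetric function). -/
open scoped BigOperators Classical

lemma sum_cells (lam : YoungDiagram) (F : ℕ → ℕ → ℝ) :
    ∑ c ∈ lam.cells, F c.1 c.2
      = ∑ i ∈ Finset.range (lam.colLen 0), ∑ j ∈ Finset.range (lam.rowLen i), F i j := by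
  rw [Finset.sum_sigma']
  apply Finset.sum_nbij' (fun c => ⟨c.1, c.2⟩) (fun p => (p.1, p.2)) <;>
    simp [YoungDiagram.mem_cells, YoungDiagram.mem_iff_lt_rowLen]
  · intro i j hj
    constructor
    · rw [← YoungDiagram.mem_iff_lt_colLen]
      exact lam.up_left_mem le_rfl (Nat.zero_le _)
        (YoungDiagram.mem_iff_lt_rowLen.mpr hj)
    · exact hj

noncomputable def acoef (m k : ℕ) : ℝ := -((-1) ^ (m - k) * (m.choose k))

lemma box_identity (m : ℕ) (x : ℝ) :
    x ^ m - (x - 1) ^ m = ∑ k ∈ Finset.range m, acoef m k * x ^ k := by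
  have h : (x - 1) ^ m = ∑ k ∈ Finset.range (m + 1),
      x ^ k * (-1 : ℝ) ^ (m - k) * (m.choose k) := by
    rw [sub_eq_add_neg, add_pow]
  rw [h, Finset.sum_range_succ]
  simp [acoef]
  ring_nf

lemma pstar_eq (m : ℕ) :
    pstar m = fun lam => ∑ k ∈ Finset.range m, acoef m k * phat k lam := by
  funext lam
  have tel : ∀ i : ℕ, ((lam.rowLen i : ℝ) - ((i : ℝ) + 1)) ^ m - (-((i : ℝ) + 1)) ^ m
      = ∑ j ∈ Finset.range (lam.rowLen i),
          ((((j : ℝ) + 1) - ((i : ℝ) + 1)) ^ m - ((j : ℝ) - ((i : ℝ) + 1)) ^ m) := by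
    intro i
    have h := Finset.sum_range_sub (fun j => ((j : ℝ) - ((i : ℝ) + 1)) ^ m) (lam.rowLen i)
    calc ((lam.rowLen i : ℝ) - ((i : ℝ) + 1)) ^ m - (-((i : ℝ) + 1)) ^ m
        = ((lam.rowLen i : ℝ) - ((i : ℝ) + 1)) ^ m - (((0:ℕ) : ℝ) - ((i : ℝ) + 1)) ^ m := by
          norm_num
      _ = ∑ j ∈ Finset.range (lam.rowLen i),
            ((((j+1 : ℕ) : ℝ) - ((i : ℝ) + 1)) ^ m - (((j : ℕ) : ℝ) - ((i : ℝ) + 1)) ^ m) :=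
          h.symm
      _ = _ := by
          apply Finset.sum_congr rfl
          intro j _
          push_cast
          ring_nf
  have : pstar m lam = ∑ c ∈ lam.cells,
      (((c.2 : ℝ) - (c.1 : ℝ)) ^ m - (((c.2 : ℝ) - (c.1 : ℝ)) - 1) ^ m) := by
    rw [pstar, sum_cells lam (fun i j => (((j:ℝ) - (i:ℝ)) ^ m - (((j:ℝ) - (i:ℝ)) - 1) ^ m))]
    apply Finset.sum_congr rfl
    intro i _
    rw [tel i]
    apply Finset.sum_congr rfl
    intro j _
    ring_nf
  rw [this]
  simp_rw [box_identity m]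
  rw [Finset.sum_comm]
  simp [phat, Finset.mul_sum]

lemma pstar_eq' (m : ℕ) :
    pstar m = ∑ k ∈ Finset.range m, acoef m k • phat k := by
  rw [pstar_eq]
  funext lam
  simp [Finset.sum_apply]

lemma phat_mem (r : ℕ) : phat r ∈ regularAlg := by
  induction r using Nat.strong_induction_on with
  | _ r ih =>
    have hc : acoef (r + 1) r = (r : ℝ) + 1 := by
      simp [acoef, Nat.choose_succ_self_right]
    have key : phat r = (((r : ℝ) + 1)⁻¹) •
        (pstar (r + 1) - ∑ k ∈ Finset.range r, acoef (r + 1) k • phat k) := by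
      have h := pstar_eq' (r + 1)
      rw [Finset.sum_range_succ, hc] at h
      rw [h]
      funext lam
      have hr : ((r : ℝ) + 1) ≠ 0 := by positivity
      simp [Finset.sum_apply]
      field_simp
    rw [key]
    refine Subalgebra.smul_mem _ (sub_mem ?_ ?_) _
    · exact Algebra.subset_adjoin ⟨r + 1, by omega, rfl⟩
    · exact Subalgebra.sum_mem _ fun k hk =>
        Subalgebra.smul_mem _ (ih k (Finset.mem_range.mp hk)) _

/-- The algebra `A` of regular functions coincides with the unital subalgebra
generated by the content power sums `p̂_0, p̂_1, p̂_2, …`. -/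
theorem regularAlg_eq_adjoin_content_power_sums :
    regularAlg = Algebra.adjoin ℝ {f | ∃ r : ℕ, f = phat r} := by
  apply le_antisymm
  · apply Algebra.adjoin_le
    rintro f ⟨m, hm, rfl⟩
    rw [pstar_eq']
    exact Subalgebra.sum_mem _ fun k _ =>
      Subalgebra.smul_mem _ (Algebra.subset_adjoin (show phat k ∈ {f | ∃ r : ℕ, f = phat r} from ⟨k, rfl⟩)) _
  · apply Algebra.adjoin_le
    rintro f ⟨r, rfl⟩
    exact phat_mem r
end

section
/- The content power sums p̂_0, p̂_1, p̂_2, … are algebraically independent as functions on Y: for every k ≥ 0, if a polynomial f ∈ ℝ[X_0, X_1, …, X_k] satisfies f(p̂_0(λ), p̂_1(λ), …, p̂_k(λ)) = 0 for every Young diagram λ, then f = 0. (Thus the algebra A of regular functions is freely generated by the functions p̂_r.) -/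
open scoped BigOperators Classical

namespace ContentPSaux

open Polynomial Finset Matrix

/-! ### Faulhaber-type polynomials -/

lemma faulhaber_aux : ∀ d : ℕ, ∀ q : ℝ[X], q.natDegree ≤ d →
    ∃ p : ℝ[X], p.natDegree ≤ d + 1 ∧ p.coeff (d+1) = q.coeff d / (d+1) ∧
      ∀ x : ℝ, p.eval x - p.eval (x-1) = q.eval x := by
  intro d
  induction d using Nat.strong_induction_on with
  | _ d ih =>
    intro q hq
    match d, ih with
    | 0, _ =>
      refine ⟨C (q.coeff 0) * X, ?_, ?_, ?_⟩
      · apply (natDegree_mul_le).trans; simp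
      · simp
      · intro x
        rw [eq_C_of_natDegree_le_zero hq]
        simp; ring
    | (e+1), ih =>
      set d := e + 1 with hd
      set c := q.coeff d with hc
      set q₁ := q - C (c/(d+1)) * (X^(d+1) - (X - C 1)^(d+1)) with hq₁
      have hXC : (X - C (1:ℝ)) = X + C (-1) := by
        rw [map_neg, ← sub_eq_add_neg]
      have hco : ∀ s : ℕ, ((X - C (1:ℝ))^(d+1)).coeff s
          = (-1:ℝ)^(d+1-s) * (((d+1).choose s : ℕ) : ℝ) := by
        intro s
        rw [hXC, coeff_X_add_C_pow]
      have hdne : ((d:ℝ) + 1) ≠ 0 := by positivity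
      have hq₁deg : q₁.natDegree ≤ e := by
        rw [natDegree_le_iff_coeff_eq_zero]
        intro m hm
        have hm' : d ≤ m := hm
        rw [hq₁, coeff_sub, coeff_C_mul, coeff_sub, hco, coeff_X_pow]
        rcases lt_trichotomy m (d+1) with h | h | h
        · have hmd : m = d := le_antisymm (Nat.lt_succ_iff.mp h) hm'
          subst hmd
          have h1 : d + 1 - d = 1 := by omega
          rw [if_neg (by omega), h1, pow_one, Nat.choose_succ_self_right, ← hc]
          push_cast
          field_simp
          ring
        · subst h
          rw [if_pos rfl, Nat.sub_self, pow_zero, Nat.choose_self]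
          have : coeff q (d+1) = 0 := coeff_eq_zero_of_natDegree_lt (by omega)
          rw [this]; push_cast; ring
        · rw [if_neg (by omega), Nat.choose_eq_zero_of_lt (by omega)]
          have : coeff q m = 0 := coeff_eq_zero_of_natDegree_lt (by omega)
          rw [this]; push_cast; ring
      obtain ⟨p₁, hp₁deg, _, hp₁ev⟩ := ih e (by omega) q₁ hq₁deg
      refine ⟨C (c/(d+1)) * X^(d+1) + p₁, ?_, ?_, ?_⟩
      · apply natDegree_add_le_of_degree_le
        · apply natDegree_mul_le.trans; simp
        · omega
      · rw [coeff_add, coeff_C_mul, coeff_X_pow, if_pos rfl,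
          coeff_eq_zero_of_natDegree_lt (by omega)]
        ring
      · intro x
        have h1 := hp₁ev x
        have h2 : q₁.eval x = q.eval x - (c/(d+1)) * (x^(d+1) - (x-1)^(d+1)) := by
          rw [hq₁]; simp
        simp only [eval_add, eval_mul, eval_C, eval_pow, eval_X]
        linarith [h1, h2]

lemma exists_S (r : ℕ) : ∃ p : ℝ[X], p.natDegree ≤ r + 1 ∧ p.coeff (r+1) = 1 / (r+1) ∧
    ∀ x : ℝ, p.eval x - p.eval (x-1) = x ^ r := by
  obtain ⟨p, h1, h2, h3⟩ := faulhaber_aux r (X^r) (by simp [natDegree_X_pow])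
  exact ⟨p, h1, by simpa using h2, by simpa using h3⟩

noncomputable def Spoly (r : ℕ) : ℝ[X] := (exists_S r).choose

lemma Spoly_natDegree (r : ℕ) : (Spoly r).natDegree ≤ r + 1 := (exists_S r).choose_spec.1
lemma Spoly_coeff (r : ℕ) : (Spoly r).coeff (r+1) = 1 / (r+1) := (exists_S r).choose_spec.2.1
lemma Spoly_eval (r : ℕ) (x : ℝ) : (Spoly r).eval x - (Spoly r).eval (x-1) = x ^ r :=
  (exists_S r).choose_spec.2.2 x

noncomputable def Dpoly (r : ℕ) : ℝ[X] := derivative (Spoly r)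

lemma Dpoly_natDegree (r : ℕ) : (Dpoly r).natDegree ≤ r :=
  (natDegree_derivative_le _).trans (by have := Spoly_natDegree r; omega)

lemma Dpoly_coeff_self (r : ℕ) : (Dpoly r).coeff r = 1 := by
  rw [Dpoly, coeff_derivative, Spoly_coeff]
  have : ((r:ℝ) + 1) ≠ 0 := by positivity
  field_simp

lemma Dpoly_coeff_gt (r s : ℕ) (h : r < s) : (Dpoly r).coeff s = 0 :=
  coeff_eq_zero_of_natDegree_lt (lt_of_le_of_lt (Dpoly_natDegree r) h)

lemma sum_shift (r : ℕ) (a : ℝ) : ∀ m : ℕ, ∑ j ∈ range m, ((j:ℝ) + a)^r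
    = (Spoly r).eval ((m:ℝ) + a - 1) - (Spoly r).eval (a - 1) := by
  intro m
  induction m with
  | zero => simp
  | succ m ih =>
    rw [sum_range_succ, ih]
    have h := Spoly_eval r ((m:ℝ) + a)
    have e2 : ((m+1:ℕ):ℝ) + a - 1 = (m:ℝ) + a := by push_cast; ring
    rw [e2]
    linarith [h]

/-! ### Vanishing on boxes -/

lemma box_vanish : ∀ {n : ℕ} (p : MvPolynomial (Fin n) ℝ) (T : Fin n → Set ℝ),
    (∀ i, (T i).Infinite) →
    (∀ x : Fin n → ℝ, (∀ i, x i ∈ T i) → MvPolynomial.eval x p = 0) → p = 0 := by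
  intro n
  induction n with
  | zero =>
    intro p T hT h
    apply (MvPolynomial.isEmptyRingEquiv ℝ (Fin 0)).injective
    rw [map_zero]
    have h0 := h finZeroElim (fun i => i.elim0)
    rw [← h0]
    have h1 : (MvPolynomial.isEmptyRingEquiv ℝ (Fin 0)) p
        = MvPolynomial.aeval (fun a => Fin.isEmpty'.elim a) p := by
      clear h h0
      induction p using MvPolynomial.induction_on with
      | C a =>
        rw [← MvPolynomial.isEmptyRingEquiv_symm_apply (R := ℝ) (σ := Fin 0) a, RingEquiv.apply_symm_apply]
        simp
      | add p q hp hq => simp only [map_add, hp, hq]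
      | mul_X p i _ => exact i.elim0
    have h2 : (finZeroElim : Fin 0 → ℝ) = (fun a => Fin.isEmpty'.elim a) := by
      funext a; exact a.elim0
    rw [h1, h2, ← MvPolynomial.coe_aeval_eq_eval]
    rfl
  | succ n ih =>
    intro p T hT h
    apply (MvPolynomial.finSuccEquiv ℝ n).injective
    simp only [map_zero]
    apply Polynomial.ext
    intro j
    rw [Polynomial.coeff_zero]
    apply ih _ (fun i => T i.succ) (fun i => hT i.succ)
    intro x hx
    have hmap : (MvPolynomial.finSuccEquiv ℝ n p).map (MvPolynomial.eval x) = 0 := by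
      apply Polynomial.eq_zero_of_infinite_isRoot
      apply Set.Infinite.mono _ (hT 0)
      intro y hy
      have hev := h (Fin.cons y x) ?_
      · simpa [MvPolynomial.eval_eq_eval_mv_eval'] using hev
      · intro i
        refine Fin.cases ?_ ?_ i
        · simpa using hy
        · intro i'; simpa using hx i'
    have hcoeff := congrArg (fun q => Polynomial.coeff q j) hmap
    simpa [Polynomial.coeff_map] using hcoeff

/-! ### The family of Young diagrams -/

def rowfun (n : ℕ) (u : ℕ → ℕ) (i : ℕ) : ℕ := ∑ j ∈ Ico i n, u j

lemma rowfun_anti (n : ℕ) (u : ℕ → ℕ) : ∀ i i', i ≤ i' → rowfun n u i' ≤ rowfun n u i := by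
  intro i i' h
  apply Finset.sum_le_sum_of_subset
  exact Ico_subset_Ico_left h

def ydiag (n : ℕ) (u : ℕ → ℕ) : YoungDiagram where
  cells := (range n).biUnion fun i =>
    (range (rowfun n u i)).map ⟨fun j => (i, j), fun a b hab => by simpa using hab⟩
  isLowerSet := by
    rintro ⟨a, b⟩ ⟨c, d⟩ hle hmem
    simp only [Finset.coe_biUnion, Set.mem_iUnion, Finset.mem_coe, Finset.mem_map,
      Finset.mem_range, Function.Embedding.coeFn_mk, Prod.mk.injEq] at hmem ⊢
    dsimp only [DFunLike.coe] at hmem ⊢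
    simp only [Prod.mk.injEq] at hmem ⊢
    obtain ⟨i, hi, j, hj, h1, h2⟩ := hmem
    obtain ⟨hca, hdb⟩ := hle
    subst h1; subst h2
    exact ⟨c, lt_of_le_of_lt hca hi, d, lt_of_le_of_lt hdb
      (lt_of_lt_of_le hj (rowfun_anti n u c i hca)), rfl, rfl⟩

lemma phat_ydiag (n : ℕ) (u : ℕ → ℕ) (r : ℕ) :
    phat r (ydiag n u) = ∑ i ∈ range n, ∑ j ∈ range (rowfun n u i), ((j:ℝ) - (i:ℝ))^r := by
  have hc : (ydiag n u).cells = (range n).biUnion (fun i =>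
      (range (rowfun n u i)).map ⟨fun j => (i, j), fun a b hab => by simpa using hab⟩) := rfl
  rw [phat, hc, Finset.sum_biUnion]
  · apply Finset.sum_congr rfl
    intro i _
    rw [Finset.sum_map]
    rfl
  · intro a _ b _ hab
    apply Finset.disjoint_left.mpr
    rintro ⟨c, d⟩ hc hd
    simp only [Finset.mem_map, Finset.mem_range, Function.Embedding.coeFn_mk,
      Prod.mk.injEq] at hc hd
    dsimp only [DFunLike.coe] at hc hd
    simp only [Prod.mk.injEq] at hc hd
    obtain ⟨j, _, h1, _⟩ := hc
    obtain ⟨j', _, h1', _⟩ := hd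
    exact hab (h1 ▸ h1'.symm ▸ rfl)

/-! ### The polynomial side -/

noncomputable def Gfun (n : ℕ) (x : Fin n → ℝ) (r : ℕ) : ℝ :=
  ∑ i : Fin n, ((Spoly r).eval (x i - (((i:ℕ):ℝ)+1)) - (Spoly r).eval (-((i:ℕ):ℝ)-1))

noncomputable def Qp (n : ℕ) (r : ℕ) : MvPolynomial (Fin n) ℝ :=
  ∑ i : Fin n, (Polynomial.aeval (MvPolynomial.X i - MvPolynomial.C (((i:ℕ):ℝ)+1)) (Spoly r)
    - MvPolynomial.C ((Spoly r).eval (-((i:ℕ):ℝ)-1)))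

lemma mv_eval_eq_aeval {n : ℕ} (x : Fin n → ℝ) (p : MvPolynomial (Fin n) ℝ) :
    MvPolynomial.eval x p = MvPolynomial.aeval x p := by
  rw [← MvPolynomial.coe_aeval_eq_eval]; rfl

lemma eval_Qp {n : ℕ} (r : ℕ) (x : Fin n → ℝ) :
    MvPolynomial.eval x (Qp n r) = Gfun n x r := by
  rw [Qp, Gfun, map_sum]
  apply Finset.sum_congr rfl
  intro i _
  rw [map_sub, MvPolynomial.eval_C]
  congr 1
  rw [mv_eval_eq_aeval, ← Polynomial.aeval_algHom_apply]
  rw [map_sub, MvPolynomial.aeval_X, MvPolynomial.aeval_C]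
  rw [Polynomial.coe_aeval_eq_eval]
  norm_num

lemma eval_aeval_comp {n m : ℕ} (x : Fin n → ℝ) (g : Fin m → MvPolynomial (Fin n) ℝ)
    (f : MvPolynomial (Fin m) ℝ) :
    MvPolynomial.eval x (MvPolynomial.aeval g f)
      = MvPolynomial.eval (fun r => MvPolynomial.eval x (g r)) f := by
  have h := congrFun (congrArg
    (fun (φ : MvPolynomial (Fin m) ℝ →ₐ[ℝ] ℝ) => (φ : MvPolynomial (Fin m) ℝ → ℝ))
    (MvPolynomial.comp_aeval g (MvPolynomial.aeval x))) f
  simp only [AlgHom.coe_comp, Function.comp_apply] at h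
  rw [mv_eval_eq_aeval, h, ← mv_eval_eq_aeval]
  have h2 : (fun i => MvPolynomial.aeval x (g i)) = (fun r => MvPolynomial.eval x (g r)) := by
    funext r; rw [← mv_eval_eq_aeval]
  rw [h2]

lemma phat_eq_Gfun (n : ℕ) (u : ℕ → ℕ) (r : ℕ) :
    phat r (ydiag n u) = Gfun n (fun i : Fin n => ((rowfun n u i.val : ℕ) : ℝ)) r := by
  rw [phat_ydiag, Gfun]
  rw [← Fin.sum_univ_eq_sum_range (fun i => ∑ j ∈ range (rowfun n u i), ((j:ℝ) - (i:ℝ))^r) n]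
  apply Finset.sum_congr rfl
  intro i _
  have h1 : ∑ j ∈ range (rowfun n u i.val), ((j:ℝ) - ((i.val:ℕ):ℝ))^r
      = ∑ j ∈ range (rowfun n u i.val), ((j:ℝ) + (-((i.val:ℕ):ℝ)))^r := by
    apply Finset.sum_congr rfl; intro j _; ring_nf
  rw [h1, sum_shift r (-((i.val:ℕ):ℝ)) (rowfun n u i.val)]
  have e1 : ((rowfun n u i.val : ℕ):ℝ) + (-((i.val:ℕ):ℝ)) - 1
      = ((rowfun n u i.val : ℕ):ℝ) - (((i.val:ℕ):ℝ)+1) := by ring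
  have e2 : (-((i.val:ℕ):ℝ)) - 1 = -((i.val:ℕ):ℝ) - 1 := by ring
  rw [e1, e2]

/-! ### Linear substitutions -/

noncomputable def XX (n : ℕ) (j : ℕ) : MvPolynomial (Fin n) ℝ :=
  if h : j < n then MvPolynomial.X ⟨j, h⟩ else 0

noncomputable def subp (n : ℕ) (i : Fin n) : MvPolynomial (Fin n) ℝ :=
  ∑ j ∈ Ico i.val n, XX n j

lemma tele (g : ℕ → ℝ) (a b : ℕ) (hab : a ≤ b) :
    ∑ j ∈ Ico a b, (g j - g (j+1)) = g a - g b := by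
  rw [Finset.sum_Ico_eq_sum_range]
  have h := Finset.sum_range_sub' (fun j => g (a + j)) (b - a)
  calc ∑ j ∈ range (b-a), (g (a+j) - g (a+j+1))
      = ∑ j ∈ range (b-a), ((fun j' => g (a+j')) j - (fun j' => g (a+j')) (j+1)) := by
        apply Finset.sum_congr rfl; intro j _
        simp [Nat.add_assoc]
    _ = g (a+0) - g (a+(b-a)) := h
    _ = g a - g b := by
        have e1 : a + 0 = a := by omega
        have e2 : a + (b - a) = b := by omega
        rw [e1, e2]

/-! ### The derivative -/

noncomputable def yv (n : ℕ) (i : Fin n) : ℝ := (0:ℝ) - (((i:ℕ):ℝ) + 1)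

noncomputable def Amat (n : ℕ) : Matrix (Fin n) (Fin n) ℝ :=
  fun r i => (Dpoly r.val).eval (yv n i)

lemma Amat_det_ne_zero (n : ℕ) : (Amat n).det ≠ 0 := by
  have hy : ∀ i j : Fin n, i ≠ j → yv n j - yv n i ≠ 0 := by
    intro i j hij
    simp only [yv]
    intro h
    apply hij
    have : ((i:ℕ):ℝ) = ((j:ℕ):ℝ) := by linarith
    exact Fin.ext (Nat.cast_injective this)
  set Cm : Matrix (Fin n) (Fin n) ℝ := fun r s => (Dpoly r.val).coeff s.val with hCm
  set Vm : Matrix (Fin n) (Fin n) ℝ := (Matrix.vandermonde (yv n))ᵀ with hVm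
  have hA : Amat n = Cm * Vm := by
    funext r i
    rw [Matrix.mul_apply]
    have hterm : ∀ s : Fin n, Cm r s * Vm s i = (Dpoly r.val).coeff s.val * (yv n i)^s.val := by
      intro s; simp [hCm, hVm, Matrix.vandermonde]
    rw [Finset.sum_congr rfl (fun s _ => hterm s)]
    rw [Amat, eval_eq_sum_range' (lt_of_le_of_lt (Dpoly_natDegree r.val) r.isLt)]
    rw [← Fin.sum_univ_eq_sum_range (fun s => (Dpoly r.val).coeff s * (yv n i) ^ s) n]
  rw [hA, Matrix.det_mul]
  apply mul_ne_zero
  · have : Cm.det = ∏ r : Fin n, Cm r r := by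
      apply Matrix.det_of_lowerTriangular
      intro i j hij
      exact Dpoly_coeff_gt i.val j.val hij
    rw [this]
    apply Finset.prod_ne_zero_iff.mpr
    intro r _
    simp [hCm, Dpoly_coeff_self]
  · rw [hVm, Matrix.det_transpose, Matrix.det_vandermonde]
    apply Finset.prod_ne_zero_iff.mpr
    intro i _
    apply Finset.prod_ne_zero_iff.mpr
    intro j hj
    exact hy i j (Finset.mem_Ioi.mp hj).ne

noncomputable def Lmap (n : ℕ) : (Fin n → ℝ) →L[ℝ] (Fin n → ℝ) :=
  ContinuousLinearMap.pi (fun r : Fin n =>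
    ∑ i : Fin n, Amat n r i • ContinuousLinearMap.proj (R := ℝ) (φ := fun _ : Fin n => ℝ) i)

lemma Lmap_apply (n : ℕ) (v : Fin n → ℝ) : Lmap n v = (Amat n).mulVec v := by
  funext r
  simp [Lmap, Matrix.mulVec, dotProduct]

lemma Lmap_surj (n : ℕ) : LinearMap.range (Lmap n : (Fin n → ℝ) →ₗ[ℝ] (Fin n → ℝ)) = ⊤ := by
  rw [LinearMap.range_eq_top]
  intro y
  have hdet : IsUnit (Amat n).det := (Amat_det_ne_zero n).isUnit
  refine ⟨(Amat n)⁻¹.mulVec y, ?_⟩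
  show Lmap n ((Amat n)⁻¹.mulVec y) = y
  rw [Lmap_apply, Matrix.mulVec_mulVec, Matrix.mul_nonsing_inv _ hdet, Matrix.one_mulVec]

lemma Gfun_deriv (n : ℕ) :
    HasStrictFDerivAt (fun x : Fin n → ℝ => (fun r : Fin n => Gfun n x r.val)) (Lmap n) 0 := by
  rw [hasStrictFDerivAt_pi']
  intro r
  rw [Lmap, ContinuousLinearMap.proj_pi]
  simp only [Gfun]
  apply HasStrictFDerivAt.fun_sum
  intro i _
  apply HasStrictFDerivAt.sub_const
  have hproj : HasStrictFDerivAt (fun x : Fin n → ℝ => x i - (((i:ℕ):ℝ)+1))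
      (ContinuousLinearMap.proj (R := ℝ) (φ := fun _ : Fin n => ℝ) i) 0 := by
    exact ((ContinuousLinearMap.proj (R := ℝ) (φ := fun _ : Fin n => ℝ)
      i).hasStrictFDerivAt (x := 0)).sub_const _
  have hpoly := Polynomial.hasStrictDerivAt (Spoly r.val)
      ((0 : Fin n → ℝ) i - (((i:ℕ):ℝ)+1))
  have hcomp := hpoly.comp_hasStrictFDerivAt 0 hproj
  have heq : ((fun x => eval x (Spoly r.val)) ∘ (fun x : Fin n → ℝ => x i - (((i:ℕ):ℝ)+1)))
      = fun x : Fin n → ℝ => eval (x i - (((i:ℕ):ℝ)+1)) (Spoly r.val) := rfl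
  rw [heq] at hcomp
  convert hcomp using 2
  · rfl
  · rfl

end ContentPSaux

/-- The content power sums `p̂_0, …, p̂_k` are algebraically independent as functions
on the set of Young diagrams. -/
theorem content_power_sums_algebraically_independent
    (k : ℕ) (f : MvPolynomial (Fin (k + 1)) ℝ)
    (hf : ∀ lam : YoungDiagram,
      MvPolynomial.eval (fun i : Fin (k + 1) => phat i.val lam) f = 0) :
    f = 0 := by
  classical
  open ContentPSaux Finset in
  -- Step 1: the composed polynomial Φ
  set Φ : MvPolynomial (Fin (k+1)) ℝ :=
    MvPolynomial.aeval (fun r : Fin (k+1) => Qp (k+1) r.val) f with hΦdef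
  have hΦ : ∀ x : Fin (k+1) → ℝ,
      MvPolynomial.eval x Φ = MvPolynomial.eval (fun r : Fin (k+1) => Gfun (k+1) x r.val) f := by
    intro x
    rw [hΦdef, eval_aeval_comp]
    have h4 : (fun r : Fin (k+1) => MvPolynomial.eval x (Qp (k+1) r.val))
        = fun r : Fin (k+1) => Gfun (k+1) x r.val := by
      funext r; rw [eval_Qp]
    rw [h4]
  -- Step 2: the substituted polynomial Ψ
  set Ψ : MvPolynomial (Fin (k+1)) ℝ := MvPolynomial.aeval (subp (k+1)) Φ with hΨdef
  -- Step 3: Ψ vanishes at natural points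
  have hnat : ∀ t : Fin (k+1) → ℕ,
      MvPolynomial.eval (fun i => ((t i : ℕ) : ℝ)) Ψ = 0 := by
    intro t
    set u : ℕ → ℕ := fun j => if h : j < (k+1) then t ⟨j, h⟩ else 0 with hu
    have hsub : ∀ i : Fin (k+1),
        MvPolynomial.eval (fun i' => ((t i' : ℕ) : ℝ)) (subp (k+1) i)
          = ((rowfun (k+1) u i.val : ℕ) : ℝ) := by
      intro i
      rw [subp, map_sum, rowfun, Nat.cast_sum]
      apply Finset.sum_congr rfl
      intro j hj
      rw [XX]
      have hjn : j < (k+1) := (Finset.mem_Ico.mp hj).2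
      rw [dif_pos hjn, MvPolynomial.eval_X, hu]
      simp [dif_pos hjn]
      intro h; omega
    rw [hΨdef, eval_aeval_comp]
    have h2 : (fun i => MvPolynomial.eval (fun i' => ((t i' : ℕ) : ℝ)) (subp (k+1) i))
        = fun i : Fin (k+1) => ((rowfun (k+1) u i.val : ℕ) : ℝ) := by
      funext i; exact hsub i
    rw [h2, hΦ]
    have h3 : (fun r : Fin (k+1) => Gfun (k+1) (fun i : Fin (k+1) => ((rowfun (k+1) u i.val : ℕ) : ℝ)) r.val)
        = fun r : Fin (k+1) => phat r.val (ydiag (k+1) u) := by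
      funext r
      rw [← phat_eq_Gfun]
    rw [h3]
    exact hf (ydiag (k+1) u)
  -- Step 4: Ψ = 0
  have hΨ0 : Ψ = 0 := by
    apply box_vanish Ψ (fun _ => Set.range ((↑) : ℕ → ℝ))
    · intro i
      exact Set.infinite_range_of_injective Nat.cast_injective
    · intro x hx
      choose t ht using hx
      have : x = fun i => ((t i : ℕ) : ℝ) := by funext i; exact (ht i).symm
      rw [this]
      exact hnat t
  -- Step 5: Φ vanishes at all real points
  have hΦ0 : ∀ x : Fin (k+1) → ℝ, MvPolynomial.eval x Φ = 0 := by
    intro x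
    set x' : ℕ → ℝ := fun j => if h : j < (k+1) then x ⟨j, h⟩ else 0 with hx'
    set tr : Fin (k+1) → ℝ := fun i => x' i.val - x' (i.val + 1) with htr
    have hsub : ∀ i : Fin (k+1), MvPolynomial.eval tr (subp (k+1) i) = x i := by
      intro i
      rw [subp, map_sum]
      have hterm : ∀ j ∈ Ico i.val (k+1),
          MvPolynomial.eval tr (XX (k+1) j) = x' j - x' (j+1) := by
        intro j hj
        have hjn : j < (k+1) := (Finset.mem_Ico.mp hj).2
        rw [XX, dif_pos hjn, MvPolynomial.eval_X, htr]
      rw [Finset.sum_congr rfl hterm, tele x' i.val (k+1) i.isLt.le]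
      have h1 : x' (k+1) = 0 := by rw [hx']; simp
      have h2 : x' i.val = x i := by rw [hx']; simp [dif_pos i.isLt]; intro h; exact absurd i.isLt (by omega)
      rw [h1, h2, sub_zero]
    have := congrArg (MvPolynomial.eval tr) hΨ0
    rw [hΨdef, eval_aeval_comp, map_zero] at this
    have h2 : (fun i => MvPolynomial.eval tr (subp (k+1) i)) = x := by
      funext i; exact hsub i
    rwa [h2] at this
  -- Step 6: f vanishes on the image of Gfun
  have hGf : ∀ x : Fin (k+1) → ℝ,
      MvPolynomial.eval (fun r : Fin (k+1) => Gfun (k+1) x r.val) f = 0 := by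
    intro x
    rw [← hΦ x]
    exact hΦ0 x
  -- Step 7: inverse function theorem
  have hmap := (Gfun_deriv (k+1)).map_nhds_eq_of_surj (Lmap_surj (k+1))
  set c : Fin (k+1) → ℝ := fun r : Fin (k+1) => Gfun (k+1) 0 r.val with hcdef
  have hU : {y : Fin (k+1) → ℝ | MvPolynomial.eval y f = 0} ∈ nhds c := by
    rw [← hmap, Filter.mem_map]
    have : (fun x : Fin (k+1) → ℝ => (fun r : Fin (k+1) => Gfun (k+1) x r.val)) ⁻¹'
        {y : Fin (k+1) → ℝ | MvPolynomial.eval y f = 0} = Set.univ := by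
      apply Set.eq_univ_of_forall
      intro x
      exact hGf x
    rw [this]
    exact Filter.univ_mem
  obtain ⟨ε, hε, hball⟩ := Metric.mem_nhds_iff.mp hU
  -- Step 8: conclude via box_vanish
  apply box_vanish f (fun i => Set.Ioo (c i - ε) (c i + ε))
  · intro i
    apply Set.Ioo_infinite
    linarith
  · intro y hy
    apply hball
    rw [Metric.mem_ball]
    rw [dist_pi_lt_iff hε]
    intro i
    rw [Real.dist_eq, abs_lt]
    obtain ⟨h1, h2⟩ := hy i
    constructor <;> linarith
end

section
/- For every Young diagram λ and every θ > 0, the identity H_θ(u;λ) = Φ_θ(u − θ; λ)/Φ_θ(u; λ) holds as an identity of rational functions in u; explicitly, u·Π_{j=1}^{d−1}(u − y_j) / Π_{i=1}^{d}(u − x_i) = Π_{i=1}^{ℓ(λ)} [(u − θ + θi)/(u − θ − λ_i + θi)] · Π_{i=1}^{ℓ(λ)} [(u − λ_i + θi)/(u + θi)]. -/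
open scoped BigOperators Classical

/-- `p*_{m;θ}(λ) = ∑_{i=1}^{ℓ(λ)} [(λ_i - θi)^m - (-θi)^m]` (1-based rows). -/
noncomputable def pstarTheta (θ : ℝ) (m : ℕ) (lam : YoungDiagram) : ℝ :=
  ∑ i ∈ Finset.range (lam.colLen 0),
    (((lam.rowLen i : ℝ) - θ * ((i : ℝ) + 1)) ^ m - (-(θ * ((i : ℝ) + 1))) ^ m)

/-- The algebra `A_θ` of θ-regular functions, generated by the `p*_{m;θ}`, `m ≥ 1`. -/
noncomputable def regularAlgTheta (θ : ℝ) : Subalgebra ℝ (YoungDiagram → ℝ) :=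
  Algebra.adjoin ℝ {f | ∃ m : ℕ, 1 ≤ m ∧ f = pstarTheta θ m}

/-- The filtration term `A_θ^(d)`. -/
noncomputable def AfilTheta (θ : ℝ) (d : ℕ) : Submodule ℝ (YoungDiagram → ℝ) :=
  Submodule.span ℝ {f | ∃ r : ℕ →₀ ℕ, r 0 = 0 ∧ (r.sum fun m k => m * k) ≤ d ∧
    f = r.prod fun m k => pstarTheta θ m ^ k}

/-- The increasing list `t_1 < ⋯ < t_{d-1}` of row indices `r ≥ 1` with `λ_r > λ_{r+1}`. -/
def kerovT (lam : YoungDiagram) : List ℕ :=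
  ((Finset.Icc 1 (lam.colLen 0)).filter fun r => lam.rowLen r < lam.rowLen (r - 1)).sort (· ≤ ·)

/-- The number `d` of inner corners of `λ`. -/
def kerovD (lam : YoungDiagram) : ℕ := (kerovT lam).length + 1

/-- Kerov interlacing coordinate `x_i` (with parameter `θ`), `1 ≤ i ≤ d`:
`x_1 = λ_1` and `x_{k+1} = λ_{t_k + 1} - θ t_k`. -/
noncomputable def kerovX (θ : ℝ) (lam : YoungDiagram) (i : ℕ) : ℝ :=
  if i ≤ 1 then (lam.rowLen 0 : ℝ)
  else (lam.rowLen ((kerovT lam).getD (i - 2) 0) : ℝ) - θ * ((kerovT lam).getD (i - 2) 0 : ℕ)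

/-- Kerov interlacing coordinate `y_k = λ_{t_k} - θ t_k` (with parameter `θ`), `1 ≤ k ≤ d-1`. -/
noncomputable def kerovY (θ : ℝ) (lam : YoungDiagram) (j : ℕ) : ℝ :=
  (lam.rowLen ((kerovT lam).getD (j - 1) 0 - 1) : ℝ) - θ * ((kerovT lam).getD (j - 1) 0 : ℕ)

/-- The coefficient `π_i^↑(λ) = ∏_{j=1}^{d-1}(x_i - y_j) / ∏_{l ≠ i}(x_i - x_l)`. -/
noncomputable def kerovPi (θ : ℝ) (lam : YoungDiagram) (i : ℕ) : ℝ :=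
  (∏ j ∈ Finset.Icc 1 (kerovD lam - 1), (kerovX θ lam i - kerovY θ lam j)) /
  (∏ l ∈ (Finset.Icc 1 (kerovD lam)).erase i, (kerovX θ lam i - kerovX θ lam l))

/-- The transition function `p^↑_θ(λ,ν)`: equals `π_i^↑(λ)` if `ν = λ ∪ □_i` covers `λ`
(where `□_i` is the addable box at the `i`-th inner corner), and `0` otherwise. -/
noncomputable def transUp (θ : ℝ) (lam nu : YoungDiagram) : ℝ :=
  if lam ≤ nu ∧ nu.card = lam.card + 1 then
    -- the (zero-based) row of the added box
    let r := sInf {r : ℕ | lam.rowLen r ≠ nu.rowLen r}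
    kerovPi θ lam (if r = 0 then 1 else (kerovT lam).idxOf r + 2)
  else 0

/-- The marginal distributions `M′_{n;θ}` of Kerov's growth process:
`M′_{0;θ}(∅) = 1`, `M′_{n+1;θ}(ν) = ∑_{λ∈Y_n, λ⊂ν} M′_{n;θ}(λ) p^↑_θ(λ,ν)`. -/
noncomputable def Mgrowth (θ : ℝ) : ℕ → YoungDiagram → ℝ
  | 0 => fun lam => if lam = ⊥ then 1 else 0
  | n + 1 => fun nu =>
      ∑ᶠ lam ∈ {lam : YoungDiagram | lam.card = n ∧ lam ≤ nu},
        Mgrowth θ n lam * transUp θ lam nu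

/-- `h_m(λ)`: the coefficient of `u^{-m}` in the expansion of
`H_θ(u;λ) = u ∏_j (u-y_j) / ∏_i (u-x_i)` at `u = ∞`; substituting `u = 1/t`,
this is the coefficient of `t^m` in `∏_j (1 - y_j t) / ∏_i (1 - x_i t)`. -/
noncomputable def hCoeff (θ : ℝ) (lam : YoungDiagram) (m : ℕ) : ℝ :=
  PowerSeries.coeff (R := ℝ) m
    ((∏ j ∈ Finset.Icc 1 (kerovD lam - 1),
        (1 - PowerSeries.C (R := ℝ) (kerovY θ lam j) * PowerSeries.X)) *
     (∏ i ∈ Finset.Icc 1 (kerovD lam),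
        (1 - PowerSeries.C (R := ℝ) (kerovX θ lam i) * PowerSeries.X))⁻¹)

/-- Super power sums in the Kerov interlacing coordinates:
`p̃_m(λ) = ∑_{i=1}^d x_i^m - ∑_{j=1}^{d-1} y_j^m`. -/
noncomputable def ptilde (θ : ℝ) (m : ℕ) (lam : YoungDiagram) : ℝ :=
  ∑ i ∈ Finset.Icc 1 (kerovD lam), kerovX θ lam i ^ m
    - ∑ j ∈ Finset.Icc 1 (kerovD lam - 1), kerovY θ lam j ^ m

/-- The operator `∂`: `(∂F)(λ) = -F(λ) + ∑_{ν ⊃ λ, |ν|=|λ|+1} p^↑_θ(λ,ν) F(ν)`. -/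
noncomputable def delOp (θ : ℝ) (F : YoungDiagram → ℝ) (lam : YoungDiagram) : ℝ :=
  -F lam + ∑ᶠ nu ∈ {nu : YoungDiagram | lam ≤ nu ∧ nu.card = lam.card + 1},
    transUp θ lam nu * F nu

namespace HAux

open Finset

/-- `y`-type value at a corner row `t` (1-based). -/
noncomputable def Yf (θ : ℝ) (lam : YoungDiagram) (t : ℕ) : ℝ :=
  (lam.rowLen (t - 1) : ℝ) - θ * t

/-- `x`-type value at a corner row `t` (1-based). -/
noncomputable def Df (θ : ℝ) (lam : YoungDiagram) (t : ℕ) : ℝ :=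
  (lam.rowLen t : ℝ) - θ * t

/-- The corner set underlying `kerovT`. -/
def S (lam : YoungDiagram) : Finset ℕ :=
  (Finset.Icc 1 (lam.colLen 0)).filter fun r => lam.rowLen r < lam.rowLen (r - 1)

lemma kerovT_eq (lam : YoungDiagram) : kerovT lam = (S lam).sort (· ≤ ·) := rfl

lemma kerovD_eq (lam : YoungDiagram) : kerovD lam = (S lam).card + 1 := by
  rw [kerovD, kerovT_eq, Finset.length_sort]

lemma mem_S {lam : YoungDiagram} {t : ℕ} :
    t ∈ S lam ↔ (1 ≤ t ∧ t ≤ lam.colLen 0) ∧ lam.rowLen t < lam.rowLen (t - 1) := by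
  simp [S, Finset.mem_filter, Finset.mem_Icc, and_assoc]

lemma lt_colLen_iff (lam : YoungDiagram) (i : ℕ) : i < lam.colLen 0 ↔ 0 < lam.rowLen i := by
  rw [← YoungDiagram.mem_iff_lt_colLen, YoungDiagram.mem_iff_lt_rowLen]

lemma rowLen_colLen (lam : YoungDiagram) : lam.rowLen (lam.colLen 0) = 0 := by
  by_contra h
  exact absurd ((lt_colLen_iff lam _).2 (Nat.pos_of_ne_zero h)) (lt_irrefl _)

lemma colLen_mem_S {lam : YoungDiagram} (hl : 1 ≤ lam.colLen 0) : lam.colLen 0 ∈ S lam := by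
  rw [mem_S]
  refine ⟨⟨hl, le_rfl⟩, ?_⟩
  rw [rowLen_colLen]
  exact (lt_colLen_iff lam _).1 (by omega)

lemma eq_of_not_mem_S {lam : YoungDiagram} {t : ℕ} (ht1 : 1 ≤ t) (ht2 : t ≤ lam.colLen 0)
    (ht : t ∉ S lam) : lam.rowLen t = lam.rowLen (t - 1) := by
  have h1 : lam.rowLen t ≤ lam.rowLen (t - 1) := lam.rowLen_anti _ _ (by omega)
  have h2 : ¬ lam.rowLen t < lam.rowLen (t - 1) := by
    intro h
    exact ht (mem_S.2 ⟨⟨ht1, ht2⟩, h⟩)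
  omega

private lemma list_prod_getD (f : ℕ → ℝ) : ∀ M : List ℕ,
    ∏ k ∈ Finset.range M.length, f (M.getD k 0) = (M.map f).prod
  | [] => by simp
  | a :: tl => by
    rw [List.length_cons, Finset.prod_range_succ']
    simp only [List.getD_cons_succ, List.getD_cons_zero, List.map_cons, List.prod_cons]
    rw [list_prod_getD f tl, mul_comm]

private lemma prod_sort_getD (T : Finset ℕ) (f : ℕ → ℝ) :
    ∏ k ∈ Finset.range (T.sort (· ≤ ·)).length, f ((T.sort (· ≤ ·)).getD k 0)
      = ∏ t ∈ T, f t := by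
  rw [list_prod_getD, ← Finset.prod_map_toList]
  exact ((T.sort_perm_toList (· ≤ ·)).map f).prod_eq

private lemma prod_shift (f : ℕ → ℝ) (n : ℕ) :
    ∏ t ∈ Finset.Icc 1 n, f t = ∏ i ∈ Finset.range n, f (i + 1) := by
  rw [← Finset.Ico_add_one_right_eq_Icc, Finset.prod_Ico_eq_prod_range]
  exact Finset.prod_congr rfl fun i _ => by rw [Nat.add_comm]

lemma kerovX_one (θ : ℝ) (lam : YoungDiagram) : kerovX θ lam 1 = (lam.rowLen 0 : ℝ) := by
  simp [kerovX]

lemma kerovX_add_two (θ : ℝ) (lam : YoungDiagram) (k : ℕ) :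
    kerovX θ lam (k + 2) = Df θ lam (((S lam).sort (· ≤ ·)).getD k 0) := by
  rw [kerovX, if_neg (by omega), kerovT_eq]
  simp [Df, Nat.add_sub_cancel]

lemma kerovY_succ (θ : ℝ) (lam : YoungDiagram) (k : ℕ) :
    kerovY θ lam (k + 1) = Yf θ lam (((S lam).sort (· ≤ ·)).getD k 0) := by
  rw [kerovY, kerovT_eq]
  simp [Yf, Nat.add_sub_cancel]

lemma prodY (θ u : ℝ) (lam : YoungDiagram) :
    ∏ j ∈ Finset.Icc 1 (kerovD lam - 1), (u - kerovY θ lam j)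
      = ∏ t ∈ S lam, (u - Yf θ lam t) := by
  have hd : kerovD lam - 1 = ((S lam).sort (· ≤ ·)).length := by
    rw [kerovD_eq, Finset.length_sort, Nat.add_sub_cancel]
  rw [hd, prod_shift, ← prod_sort_getD (S lam) (fun t => u - Yf θ lam t)]
  exact Finset.prod_congr rfl fun k _ => by rw [kerovY_succ]

lemma prodX (θ u : ℝ) (lam : YoungDiagram) :
    ∏ i ∈ Finset.Icc 1 (kerovD lam), (u - kerovX θ lam i)
      = (u - (lam.rowLen 0 : ℝ)) * ∏ t ∈ S lam, (u - Df θ lam t) := by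
  have hd : kerovD lam = ((S lam).sort (· ≤ ·)).length + 1 := by
    rw [kerovD_eq, Finset.length_sort]
  rw [hd, prod_shift, Finset.prod_range_succ']
  rw [show (0 : ℕ) + 1 = 1 from rfl, kerovX_one, mul_comm]
  congr 1
  rw [← prod_sort_getD (S lam) (fun t => u - Df θ lam t)]
  refine Finset.prod_congr rfl fun k _ => ?_
  rw [show k + 1 + 1 = k + 2 from rfl, kerovX_add_two]

lemma rhs_eq (θ u : ℝ) (lam : YoungDiagram) (hl : 1 ≤ lam.colLen 0)
    (h2 : ∀ i < lam.colLen 0, u - θ - (lam.rowLen i : ℝ) + θ * ((i : ℝ) + 1) ≠ 0)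
    (h3 : ∀ i < lam.colLen 0, u + θ * ((i : ℝ) + 1) ≠ 0) :
    (∏ i ∈ Finset.range (lam.colLen 0),
        (u - θ + θ * ((i : ℝ) + 1)) / (u - θ - (lam.rowLen i : ℝ) + θ * ((i : ℝ) + 1))) *
      (∏ i ∈ Finset.range (lam.colLen 0),
        (u - (lam.rowLen i : ℝ) + θ * ((i : ℝ) + 1)) / (u + θ * ((i : ℝ) + 1)))
      = u * (∏ t ∈ S lam, (u - Yf θ lam t)) /
          ((u - (lam.rowLen 0 : ℝ)) * ∏ t ∈ S lam, (u - Df θ lam t)) := by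
  obtain ⟨m, hm⟩ : ∃ m, lam.colLen 0 = m + 1 :=
    ⟨lam.colLen 0 - 1, (Nat.succ_pred_eq_of_pos hl).symm⟩
  have hD : ∀ i, i < lam.colLen 0 → u - Df θ lam i ≠ 0 := by
    intro i hi h0
    apply h2 i hi
    rw [Df] at h0
    push_cast at h0 ⊢
    linarith
  have hmS : m + 1 ∈ S lam := hm ▸ colLen_mem_S hl
  have hSsub : ∀ t ∈ S lam, 1 ≤ t ∧ t ≤ m + 1 := by
    intro t ht
    have := (mem_S.1 ht).1
    omega
  -- the four plain products
  rw [Finset.prod_div_distrib, Finset.prod_div_distrib, div_mul_div_comm, hm]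
  -- numerator A-part
  have hA : ∏ i ∈ Finset.range (m + 1), (u - θ + θ * ((i : ℝ) + 1))
      = (∏ i ∈ Finset.range m, (u + θ * ((i : ℝ) + 1))) * u := by
    rw [Finset.prod_range_succ']
    congr 1
    · exact Finset.prod_congr rfl fun i _ => by push_cast; ring
    · push_cast; ring
  have hE : ∏ i ∈ Finset.range (m + 1), (u + θ * ((i : ℝ) + 1))
      = (∏ i ∈ Finset.range m, (u + θ * ((i : ℝ) + 1))) * (u + θ * ((m : ℝ) + 1)) :=
    Finset.prod_range_succ _ _
  -- C-part : numerators of second product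
  have hYfsucc : ∀ i : ℕ, u - Yf θ lam (i + 1) = u - (lam.rowLen i : ℝ) + θ * ((i : ℝ) + 1) := by
    intro i
    rw [Yf, Nat.add_sub_cancel]
    push_cast; ring
  have hC : ∏ i ∈ Finset.range (m + 1), (u - (lam.rowLen i : ℝ) + θ * ((i : ℝ) + 1))
      = ∏ t ∈ Finset.Icc 1 (m + 1), (u - Yf θ lam t) := by
    rw [prod_shift]
    exact Finset.prod_congr rfl fun i _ => (hYfsucc i).symm
  -- B-part
  have hB : ∏ i ∈ Finset.range (m + 1), (u - θ - (lam.rowLen i : ℝ) + θ * ((i : ℝ) + 1))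
      = (∏ t ∈ Finset.Icc 1 m, (u - Df θ lam t)) * (u - (lam.rowLen 0 : ℝ)) := by
    have hDf : ∀ i : ℕ, u - θ - (lam.rowLen i : ℝ) + θ * ((i : ℝ) + 1) = u - Df θ lam i := by
      intro i
      rw [Df]; push_cast; ring
    rw [Finset.prod_congr rfl fun i _ => hDf i, Finset.prod_range_succ', prod_shift]
    congr 1
    rw [Df]; push_cast; ring
  rw [hA, hE, hC, hB]
  -- split the Icc-products along membership in S
  have hfilter1 : (Finset.Icc 1 (m + 1)).filter (· ∈ S lam) = S lam := by
    rw [Finset.filter_mem_eq_inter, Finset.inter_eq_right]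
    intro t ht
    have := hSsub t ht
    rw [Finset.mem_Icc]
    omega
  have hfilter2 : (Finset.Icc 1 (m + 1)).filter (fun t => ¬ t ∈ S lam)
      = (Finset.Icc 1 m).filter (fun t => ¬ t ∈ S lam) := by
    ext t
    simp only [Finset.mem_filter, Finset.mem_Icc]
    constructor
    · rintro ⟨⟨ht1, ht2⟩, hts⟩
      have : t ≠ m + 1 := fun h => hts (h ▸ hmS)
      exact ⟨⟨ht1, by omega⟩, hts⟩
    · rintro ⟨⟨ht1, ht2⟩, hts⟩
      exact ⟨⟨ht1, by omega⟩, hts⟩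
  have hfilter3 : (Finset.Icc 1 m).filter (· ∈ S lam) = (S lam).erase (m + 1) := by
    ext t
    simp only [Finset.mem_filter, Finset.mem_Icc, Finset.mem_erase]
    constructor
    · rintro ⟨⟨ht1, ht2⟩, hts⟩
      exact ⟨by omega, hts⟩
    · rintro ⟨htne, hts⟩
      have := hSsub t hts
      exact ⟨⟨by omega, by omega⟩, hts⟩
  have hKeq : ∀ t ∈ (Finset.Icc 1 m).filter (fun t => ¬ t ∈ S lam),
      (u - Yf θ lam t) = (u - Df θ lam t) := by
    intro t ht
    simp only [Finset.mem_filter, Finset.mem_Icc] at ht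
    rw [Yf, Df, eq_of_not_mem_S ht.1.1 (by omega) ht.2]
  set K := ∏ t ∈ (Finset.Icc 1 m).filter (fun t => ¬ t ∈ S lam), (u - Df θ lam t) with hK
  have hCsplit : ∏ t ∈ Finset.Icc 1 (m + 1), (u - Yf θ lam t)
      = (∏ t ∈ S lam, (u - Yf θ lam t)) * K := by
    rw [← Finset.prod_filter_mul_prod_filter_not (Finset.Icc 1 (m + 1)) (· ∈ S lam), hfilter1,
      hfilter2]
    congr 1
    exact Finset.prod_congr rfl hKeq
  have hBsplit : ∏ t ∈ Finset.Icc 1 m, (u - Df θ lam t)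
      = (∏ t ∈ (S lam).erase (m + 1), (u - Df θ lam t)) * K := by
    rw [← Finset.prod_filter_mul_prod_filter_not (Finset.Icc 1 m) (· ∈ S lam), hfilter3]
  have hPX : ∏ t ∈ S lam, (u - Df θ lam t)
      = (u + θ * ((m : ℝ) + 1)) * ∏ t ∈ (S lam).erase (m + 1), (u - Df θ lam t) := by
    rw [← Finset.mul_prod_erase (S lam) _ hmS]
    congr 1
    rw [Df, show lam.rowLen (m + 1) = 0 from hm ▸ rowLen_colLen lam]
    push_cast; ring
  rw [hCsplit, hBsplit, hPX]
  -- nonvanishing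
  have hQ : (∏ i ∈ Finset.range m, (u + θ * ((i : ℝ) + 1))) ≠ 0 :=
    Finset.prod_ne_zero_iff.2 fun i hi => h3 i (by rw [hm]; exact (Finset.mem_range.1 hi).trans (Nat.lt_succ_self m))
  have hKne : K ≠ 0 := by
    rw [hK]
    refine Finset.prod_ne_zero_iff.2 fun t ht => ?_
    simp only [Finset.mem_filter, Finset.mem_Icc] at ht
    exact hD t (by omega)
  have hρ : u - (lam.rowLen 0 : ℝ) ≠ 0 := by
    have := hD 0 (by omega)
    rw [Df] at this
    push_cast at this
    intro h0; exact this (by linarith)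
  have hθm : u + θ * ((m : ℝ) + 1) ≠ 0 := h3 m (by omega)
  have hPXe : (∏ t ∈ (S lam).erase (m + 1), (u - Df θ lam t)) ≠ 0 := by
    refine Finset.prod_ne_zero_iff.2 fun t ht => ?_
    have ht' := Finset.mem_of_mem_erase ht
    have htne := Finset.ne_of_mem_erase ht
    have := hSsub t ht'
    exact hD t (by omega)
  rw [div_eq_div_iff (mul_ne_zero (mul_ne_zero (mul_ne_zero hPXe hKne) hρ) (mul_ne_zero hQ hθm)) (mul_ne_zero hρ (mul_ne_zero hθm hPXe))]
  ring

end HAux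

/-- `H_θ(u;λ) = Φ_θ(u-θ;λ) / Φ_θ(u;λ)` as rational functions in `u`,
i.e. the identity holds for every `u` where both sides are defined. -/
theorem H_eq_char_fun_ratio (θ : ℝ) (hθ : 0 < θ) (lam : YoungDiagram) (u : ℝ)
    (h1 : ∀ i ∈ Finset.Icc 1 (kerovD lam), u - kerovX θ lam i ≠ 0)
    (h2 : ∀ i < lam.colLen 0, u - θ - (lam.rowLen i : ℝ) + θ * ((i : ℝ) + 1) ≠ 0)
    (h3 : ∀ i < lam.colLen 0, u + θ * ((i : ℝ) + 1) ≠ 0) :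
    (u * ∏ j ∈ Finset.Icc 1 (kerovD lam - 1), (u - kerovY θ lam j)) /
        (∏ i ∈ Finset.Icc 1 (kerovD lam), (u - kerovX θ lam i))
      = (∏ i ∈ Finset.range (lam.colLen 0),
            (u - θ + θ * ((i : ℝ) + 1)) / (u - θ - (lam.rowLen i : ℝ) + θ * ((i : ℝ) + 1))) *
        (∏ i ∈ Finset.range (lam.colLen 0),
            (u - (lam.rowLen i : ℝ) + θ * ((i : ℝ) + 1)) / (u + θ * ((i : ℝ) + 1))) := by
  by_cases hl : 1 ≤ lam.colLen 0
  · rw [HAux.prodY, HAux.prodX, HAux.rhs_eq θ u lam hl h2 h3]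
  · have h0 : lam.colLen 0 = 0 := by omega
    have hS : HAux.S lam = ∅ := by
      rw [HAux.S, h0]
      simp
    have hrow : lam.rowLen 0 = 0 := by
      have := HAux.rowLen_colLen lam
      rwa [h0] at this
    have hune : u ≠ 0 := by
      have h := h1 1 (by
        rw [Finset.mem_Icc]
        exact ⟨le_refl 1, by rw [HAux.kerovD_eq]; omega⟩)
      rwa [HAux.kerovX_one, hrow, Nat.cast_zero, sub_zero] at h
    rw [HAux.prodY, HAux.prodX, hS, h0]
    simp [hrow]
    exact hune
end

section
/- Fix θ > 0. For every integer m ≥ 2, the function p̃_m : Y → ℝ defined by p̃_m(λ) = Σ_{i=1}^{d}(x_i)^m − Σ_{j=1}^{d−1}(y_j)^m (super power sums in the Kerov interlacing coordinates of λ with parameter θ) belongs to the algebra A_θ of θ-regular functions; more precisely, there exist real constants α_1,…,α_{m−2} (depending on θ and m but not on λ) such that p̃_m = θ·m·p*_{m−1;θ} + Σ_{l=1}^{m−2} α_l · p*_{l;θ} as functions on Y. In particular p̃_m ∈ A_θ^(m−1). -/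
open scoped BigOperators Classical

private lemma sum_Icc_one (n : ℕ) (f : ℕ → ℝ) :
    ∑ i ∈ Finset.Icc 1 n, f i = ∑ i ∈ Finset.range n, f (i + 1) := by
  induction n with
  | zero => simp
  | succ p ih =>
      rw [Finset.sum_Icc_succ_top (Nat.succ_le_succ (Nat.zero_le p)), ih,
        Finset.sum_range_succ]

private lemma list_sum_getD (g : ℕ → ℝ) : ∀ (L : List ℕ),
    ∑ j ∈ Finset.range L.length, g (L.getD j 0) = (L.map g).sum
  | [] => by simp
  | a :: L => by
      rw [List.length_cons, Finset.sum_range_succ']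
      simp only [List.getD_cons_succ, List.getD_cons_zero, List.map_cons, List.sum_cons]
      rw [list_sum_getD g L]; ring

private lemma sort_sum_getD (S : Finset ℕ) (g : ℕ → ℝ) :
    ∑ j ∈ Finset.range ((S.sort (· ≤ ·)).length), g ((S.sort (· ≤ ·)).getD j 0)
      = ∑ r ∈ S, g r := by
  rw [list_sum_getD, ((S.sort_perm_toList (· ≤ ·)).map g).sum_eq, Finset.sum_map_toList]

private lemma rowLen_pos_iff (lam : YoungDiagram) (i : ℕ) :
    0 < lam.rowLen i ↔ i < lam.colLen 0 := by
  rw [← YoungDiagram.mem_iff_lt_rowLen, YoungDiagram.mem_iff_lt_colLen]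
def Tset (lam : YoungDiagram) : Finset ℕ :=
  (Finset.Icc 1 (lam.colLen 0)).filter fun r => lam.rowLen r < lam.rowLen (r - 1)

noncomputable def PhiF (θ : ℝ) (m : ℕ) (lam : YoungDiagram) (r : ℕ) : ℝ :=
  ((lam.rowLen r : ℝ) - θ * r) ^ m - ((lam.rowLen (r - 1) : ℝ) - θ * r) ^ m

private lemma kerovT_eq (lam : YoungDiagram) : kerovT lam = (Tset lam).sort (· ≤ ·) := rfl

private lemma ptilde_eq_corner_sum (θ : ℝ) (m : ℕ) (lam : YoungDiagram) :
    ptilde θ m lam = (lam.rowLen 0 : ℝ) ^ m + ∑ r ∈ Tset lam, PhiF θ m lam r := by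
  have hd : kerovD lam = (kerovT lam).length + 1 := rfl
  have key : ∑ r ∈ Tset lam, PhiF θ m lam r
      = ∑ i ∈ Finset.range ((kerovT lam).length), PhiF θ m lam ((kerovT lam).getD i 0) := by
    rw [kerovT_eq, sort_sum_getD]
  have hx1 : kerovX θ lam 1 = (lam.rowLen 0 : ℝ) := by simp [kerovX]
  rw [ptilde, hd, Nat.add_sub_cancel, sum_Icc_one, sum_Icc_one, Finset.sum_range_succ',
    key, add_sub_right_comm, ← Finset.sum_sub_distrib]
  rw [show (0:ℕ)+1 = 1 from rfl, hx1, add_comm]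
  congr 1
private lemma corner_sum_eq_row_sum (θ : ℝ) (m : ℕ) (hm : 1 ≤ m) (lam : YoungDiagram) :
    (lam.rowLen 0 : ℝ) ^ m + ∑ r ∈ Tset lam, PhiF θ m lam r
      = ∑ i ∈ Finset.range (lam.colLen 0),
          (((lam.rowLen i : ℝ) - θ * i) ^ m - ((lam.rowLen i : ℝ) - θ * ((i:ℝ)+1)) ^ m
            + ((-(θ * ((i:ℝ)+1))) ^ m - (-(θ * (i:ℝ))) ^ m)) := by
  have hm0 : m ≠ 0 := by omega
  rcases Nat.eq_zero_or_pos (lam.colLen 0) with h0 | hpos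
  · have hT : Tset lam = ∅ := by simp [Tset, h0]
    have hr0 : lam.rowLen 0 = 0 := by
      by_contra h
      exact absurd ((rowLen_pos_iff lam 0).mp (Nat.pos_of_ne_zero h)) (by omega)
    simp [hT, h0, hr0, zero_pow hm0]
  · obtain ⟨p, hp⟩ : ∃ p, lam.colLen 0 = p + 1 := ⟨lam.colLen 0 - 1, by omega⟩
    -- the second telescoping sum
    have h2 : ∑ i ∈ Finset.range (lam.colLen 0),
        ((-(θ * ((i:ℝ)+1))) ^ m - (-(θ * (i:ℝ))) ^ m)
        = (-(θ * (lam.colLen 0 : ℝ))) ^ m := by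
      have := Finset.sum_range_sub (fun i => (-(θ * (i:ℝ))) ^ m) (lam.colLen 0)
      push_cast at this
      rw [this]
      simp [zero_pow hm0]
    -- the first telescoping sum
    have hPhi : ∀ i : ℕ,
        ((lam.rowLen (i+1) : ℝ) - θ * ((i:ℝ)+1)) ^ m
          - ((lam.rowLen i : ℝ) - θ * ((i:ℝ)+1)) ^ m = PhiF θ m lam (i+1) := by
      intro i
      simp only [PhiF, Nat.add_sub_cancel]
      push_cast
      ring_nf
    have hsubset : (Tset lam).erase (p+1) ⊆ Finset.Icc 1 p := by
      intro r hr
      have h1 := Finset.mem_of_mem_erase hr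
      have h2' := Finset.ne_of_mem_erase hr
      simp only [Tset, Finset.mem_filter, Finset.mem_Icc, hp] at h1
      have : r ≤ p := by omega
      exact Finset.mem_Icc.mpr ⟨by omega, this⟩
    have hvanish : ∀ r ∈ Finset.Icc 1 p, r ∉ (Tset lam).erase (p+1) →
        PhiF θ m lam r = 0 := by
      intro r hr hnot
      rw [Finset.mem_Icc] at hr
      have hrT : r ∉ Tset lam := by
        intro h
        exact hnot (Finset.mem_erase.mpr ⟨by omega, h⟩)
      have hle : ¬ lam.rowLen r < lam.rowLen (r-1) := by
        intro hlt
        exact hrT (Finset.mem_filter.mpr ⟨Finset.mem_Icc.mpr ⟨hr.1, by omega⟩, hlt⟩)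
      have heq : lam.rowLen r = lam.rowLen (r-1) :=
        le_antisymm (lam.rowLen_anti (r-1) r (by omega)) (by omega)
      simp [PhiF, heq]
    have hmem : p + 1 ∈ Tset lam := by
      have hzero : lam.rowLen (p+1) = 0 := by
        by_contra h
        have := (rowLen_pos_iff lam (p+1)).mp (Nat.pos_of_ne_zero h)
        omega
      have hposp : 0 < lam.rowLen p := (rowLen_pos_iff lam p).mpr (by omega)
      refine Finset.mem_filter.mpr ⟨Finset.mem_Icc.mpr ⟨by omega, by omega⟩, ?_⟩
      simpa [Nat.add_sub_cancel, hzero] using hposp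
    have hPhiTop : PhiF θ m lam (p+1)
        = (-(θ * ((lam.colLen 0 : ℕ) : ℝ))) ^ m
          - ((lam.rowLen p : ℝ) - θ * ((p:ℝ)+1)) ^ m := by
      have hzero : lam.rowLen (p+1) = 0 := by
        by_contra h
        have := (rowLen_pos_iff lam (p+1)).mp (Nat.pos_of_ne_zero h)
        omega
      simp only [PhiF, Nat.add_sub_cancel, hzero, hp]
      push_cast
      ring_nf
    -- assemble
    rw [Finset.sum_add_distrib, h2, hp]
    rw [Finset.sum_sub_distrib, Finset.sum_range_succ' (fun i => ((lam.rowLen i : ℝ) - θ * i) ^ m) p,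
      Finset.sum_range_succ (fun i => ((lam.rowLen i : ℝ) - θ * ((i:ℝ)+1)) ^ m) p]
    have hmid : ∑ i ∈ Finset.range p,
        ((lam.rowLen (i+1) : ℝ) - θ * ((i+1 : ℕ):ℝ)) ^ m
        = ∑ i ∈ Finset.range p, (PhiF θ m lam (i+1)
            + ((lam.rowLen i : ℝ) - θ * ((i:ℝ)+1)) ^ m) := by
      apply Finset.sum_congr rfl
      intro i _
      have := hPhi i
      push_cast
      push_cast at this
      linarith [this]
    rw [hmid, Finset.sum_add_distrib]
    have hT : ∑ i ∈ Finset.range p, PhiF θ m lam (i+1) = ∑ r ∈ (Tset lam).erase (p+1), PhiF θ m lam r := by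
      rw [← sum_Icc_one]
      exact (Finset.sum_subset hsubset (fun r h1 h2 => hvanish r h1 h2)).symm
    have hfull : ∑ r ∈ (Tset lam).erase (p+1), PhiF θ m lam r + PhiF θ m lam (p+1)
        = ∑ r ∈ Tset lam, PhiF θ m lam r := Finset.sum_erase_add _ _ hmem
    rw [hT]
    have hss : ∑ x ∈ Finset.range p, (-θ - θ * (x:ℝ) + (lam.rowLen x : ℝ)) ^ m
        = ∑ x ∈ Finset.range p, ((lam.rowLen x : ℝ) - θ * ((x:ℝ)+1)) ^ m :=
      Finset.sum_congr rfl fun x _ => by ring_nf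
    rw [← hfull, hPhiTop, hp]
    push_cast
    ring_nf
private lemma hbin (θ : ℝ) (m : ℕ) (x : ℝ) :
    (x + θ) ^ m - x ^ m
      = ∑ k ∈ Finset.range m, x ^ k * θ ^ (m - k) * (m.choose k : ℝ) := by
  rw [add_pow x θ m, Finset.sum_range_succ]
  simp

private lemma ptilde_eq_sum_pstar (θ : ℝ) (m : ℕ) (hm : 1 ≤ m) (lam : YoungDiagram) :
    ptilde θ m lam
      = ∑ k ∈ Finset.range m, (m.choose k : ℝ) * θ ^ (m - k) * pstarTheta θ k lam := by
  rw [ptilde_eq_corner_sum, corner_sum_eq_row_sum θ m hm lam]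
  have hrow : ∀ i ∈ Finset.range (lam.colLen 0),
      (((lam.rowLen i : ℝ) - θ * i) ^ m - ((lam.rowLen i : ℝ) - θ * ((i:ℝ)+1)) ^ m
        + ((-(θ * ((i:ℝ)+1))) ^ m - (-(θ * (i:ℝ))) ^ m))
      = ∑ k ∈ Finset.range m,
          ((((lam.rowLen i : ℝ) - θ * ((i:ℝ)+1)) ^ k - (-(θ * ((i:ℝ)+1))) ^ k)
            * θ ^ (m - k) * (m.choose k : ℝ)) := by
    intro i _
    have e1 := hbin θ m ((lam.rowLen i : ℝ) - θ * ((i:ℝ)+1))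
    have e2 := hbin θ m (-(θ * ((i:ℝ)+1)))
    have hsplit : ∑ k ∈ Finset.range m,
        ((((lam.rowLen i : ℝ) - θ * ((i:ℝ)+1)) ^ k - (-(θ * ((i:ℝ)+1))) ^ k)
          * θ ^ (m - k) * (m.choose k : ℝ))
        = ∑ k ∈ Finset.range m,
            (((lam.rowLen i : ℝ) - θ * ((i:ℝ)+1)) ^ k * θ ^ (m - k) * (m.choose k : ℝ))
          - ∑ k ∈ Finset.range m,
            ((-(θ * ((i:ℝ)+1))) ^ k * θ ^ (m - k) * (m.choose k : ℝ)) := by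
      rw [← Finset.sum_sub_distrib]
      exact Finset.sum_congr rfl fun k _ => by ring
    rw [hsplit, ← e1, ← e2]
    have ha : (lam.rowLen i : ℝ) - θ * ((i:ℝ)+1) + θ = (lam.rowLen i : ℝ) - θ * i := by ring
    have hb : -(θ * ((i:ℝ)+1)) + θ = -(θ * (i:ℝ)) := by ring
    rw [ha, hb]
    ring
  rw [Finset.sum_congr rfl hrow, Finset.sum_comm]
  apply Finset.sum_congr rfl
  intro k _
  rw [pstarTheta, Finset.mul_sum]
  exact Finset.sum_congr rfl fun i _ => by ring
private lemma pstar_zero_fun (θ : ℝ) : pstarTheta θ 0 = (0 : YoungDiagram → ℝ) := by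
  funext lam; simp [pstarTheta]

private lemma pstar_mem (θ : ℝ) {k d : ℕ} (hk : 1 ≤ k) (hkd : k ≤ d) :
    pstarTheta θ k ∈ AfilTheta θ d := by
  apply Submodule.subset_span
  refine ⟨Finsupp.single k 1, ?_, ?_, ?_⟩
  · exact Finsupp.single_eq_of_ne (by omega)
  · rw [Finsupp.sum_single_index (mul_zero k)]
    simpa using hkd
  · rw [Finsupp.prod_single_index (h := fun m k => pstarTheta θ m ^ k) (pow_zero _), pow_one]

/-- For `m ≥ 2`, `p̃_m = θ·m·p*_{m-1;θ} + ∑_{l=1}^{m-2} α_l p*_{l;θ}` for some real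
constants `α_l`; in particular `p̃_m` is θ-regular of degree at most `m - 1`. -/
theorem ptilde_eq_theta_regular (θ : ℝ) (hθ : 0 < θ) (m : ℕ) (hm : 2 ≤ m) :
    (∃ α : ℕ → ℝ, ∀ lam : YoungDiagram,
      ptilde θ m lam = θ * (m : ℝ) * pstarTheta θ (m - 1) lam +
        ∑ l ∈ Finset.Icc 1 (m - 2), α l * pstarTheta θ l lam) ∧
    ptilde θ m ∈ AfilTheta θ (m - 1) := by
  constructor
  · refine ⟨fun l => (m.choose l : ℝ) * θ ^ (m - l), fun lam => ?_⟩
    rw [ptilde_eq_sum_pstar θ m (by omega) lam]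
    obtain ⟨s, rfl⟩ : ∃ s, m = s + 2 := ⟨m - 2, by omega⟩
    rw [Finset.sum_range_succ, Finset.sum_range_succ', sum_Icc_one]
    have h0 : pstarTheta θ 0 lam = 0 := by simp [pstarTheta]
    have hch : (((s+2).choose (s+1)) : ℝ) = (s:ℝ) + 2 := by
      rw [Nat.choose_succ_self_right]; push_cast; ring
    have h1 : s + 2 - (s + 1) = 1 := by omega
    have h2 : s + 2 - 2 = s := by omega
    have h3 : s + 2 - 1 = s + 1 := by omega
    rw [h0, hch, h1, h2, h3]
    push_cast
    ring
  · have hf : ptilde θ m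
        = ∑ k ∈ Finset.range m, ((m.choose k : ℝ) * θ ^ (m - k)) • pstarTheta θ k := by
      funext lam
      rw [ptilde_eq_sum_pstar θ m (by omega) lam, Finset.sum_apply]
      exact Finset.sum_congr rfl fun k _ => by simp [mul_assoc]
    rw [hf]
    apply Submodule.sum_mem
    intro k hk
    rcases Nat.eq_zero_or_pos k with rfl | hk1
    · rw [pstar_zero_fun, smul_zero]
      exact Submodule.zero_mem _
    · exact Submodule.smul_mem _ _
        (pstar_mem θ hk1 (by have := Finset.mem_range.mp hk; omega))
end

section
/- For every Young diagram λ and every θ > 0, the coefficients π_i^↑(λ) = Π_{j=1}^{d−1}(x_i − y_j) / Π_{l≠i}(x_i − x_l), i = 1,…,d, are strictly positive and sum to 1: π_i^↑(λ) > 0 for each i, and Σ_{i=1}^{d} π_i^↑(λ) = 1. -/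
open scoped BigOperators Classical

section Aux

open Finset Polynomial

/-- General Lagrange identity: sum of `∏(v i - y j)/∏(v i - v l)` equals 1. -/
lemma aux_lagrange_sum {s : Finset ℕ} {v : ℕ → ℝ} (hvs : Set.InjOn v ↑s)
    (hs : s.Nonempty) (t : Finset ℕ) (ht : t.card = s.card - 1) (y : ℕ → ℝ) :
    ∑ i ∈ s, (∏ j ∈ t, (v i - y j)) / (∏ l ∈ s.erase i, (v i - v l)) = 1 := by
  set f : ℝ[X] := ∏ j ∈ t, (X - C (y j)) with hf
  have hmonic : f.Monic := monic_prod_of_monic _ _ fun j _ => monic_X_sub_C _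
  have hdeg : f.natDegree = s.card - 1 := by
    rw [hf, natDegree_prod_of_monic _ _ fun j _ => monic_X_sub_C _]
    simp [ht]
  have hdlt : f.degree < s.card := by
    rw [degree_eq_natDegree hmonic.ne_zero, hdeg]
    exact_mod_cast Nat.sub_lt hs.card_pos one_pos
  have hinterp := Lagrange.eq_interpolate hvs hdlt
  have hcoeff := congrArg (fun p : ℝ[X] => p.coeff (s.card - 1)) hinterp
  simp only [Lagrange.interpolate_apply, finset_sum_coeff, coeff_C_mul] at hcoeff
  have hcf : f.coeff (s.card - 1) = 1 := by
    rw [← hdeg]; exact hmonic.coeff_natDegree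
  have hcb : ∀ i ∈ s, (Lagrange.basis s v i).coeff (s.card - 1)
      = (∏ l ∈ s.erase i, (v i - v l))⁻¹ := by
    intro i hi
    have hb : Lagrange.basis s v i
        = C (∏ l ∈ s.erase i, (v i - v l)⁻¹) * ∏ l ∈ s.erase i, (X - C (v l)) := by
      rw [Lagrange.basis]
      simp_rw [Lagrange.basisDivisor]
      rw [Finset.prod_mul_distrib, map_prod]
    have hm : (∏ l ∈ s.erase i, (X - C (v l)) : ℝ[X]).Monic :=
      monic_prod_of_monic _ _ fun j _ => monic_X_sub_C _
    have hd : (∏ l ∈ s.erase i, (X - C (v l)) : ℝ[X]).natDegree = s.card - 1 := by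
      rw [natDegree_prod_of_monic _ _ fun j _ => monic_X_sub_C _]
      simp [Finset.card_erase_of_mem hi]
    rw [hb, coeff_C_mul, ← hd, hm.coeff_natDegree, mul_one, ← Finset.prod_inv_distrib]
  rw [hcf] at hcoeff
  refine Eq.trans (Finset.sum_congr rfl fun i hi => ?_) hcoeff.symm
  rw [hcb i hi, hf, eval_prod, div_eq_mul_inv]
  simp

lemma aux_prod_neg {s : Finset ℕ} {f : ℕ → ℝ} (h : ∀ a ∈ s, f a < 0) :
    0 < (-1 : ℝ) ^ s.card * ∏ a ∈ s, f a := by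
  have h1 : ∏ a ∈ s, f a = (-1 : ℝ) ^ s.card * ∏ a ∈ s, (-(f a)) := by
    rw [← Finset.prod_const, ← Finset.prod_mul_distrib]
    simp
  rw [h1, ← mul_assoc, ← pow_add]
  have h2 : (-1 : ℝ) ^ (s.card + s.card) = 1 := by
    rw [← two_mul, pow_mul]; norm_num
  rw [h2, one_mul]
  exact Finset.prod_pos fun a ha => neg_pos.mpr (h a ha)

lemma kerovT_sorted (lam : YoungDiagram) : (kerovT lam).Pairwise (· < ·) :=
  (Finset.sortedLT_sort _).pairwise

lemma kerovT_mem {lam : YoungDiagram} {t : ℕ} (h : t ∈ kerovT lam) :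
    1 ≤ t ∧ lam.rowLen t < lam.rowLen (t - 1) := by
  rw [kerovT, Finset.mem_sort, Finset.mem_filter, Finset.mem_Icc] at h
  exact ⟨h.1.1, h.2⟩

lemma kerovT_getD_mem {lam : YoungDiagram} {k : ℕ} (hk : k < (kerovT lam).length) :
    (kerovT lam).getD k 0 ∈ kerovT lam := by
  rw [List.getD_eq_getElem _ _ hk]
  exact List.getElem_mem _

lemma kerovT_getD_lt {lam : YoungDiagram} {k k' : ℕ} (h : k < k')
    (hk' : k' < (kerovT lam).length) :
    (kerovT lam).getD k 0 < (kerovT lam).getD k' 0 := by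
  rw [List.getD_eq_getElem _ _ (h.trans hk'), List.getD_eq_getElem _ _ hk']
  exact List.pairwise_iff_getElem.mp (kerovT_sorted lam) _ _ _ _ h

lemma kerovY_lt_kerovX {θ : ℝ} (hθ : 0 < θ) (lam : YoungDiagram) {j : ℕ}
    (h1 : 1 ≤ j) (h2 : j ≤ kerovD lam - 1) :
    kerovY θ lam j < kerovX θ lam j := by
  have hlen : j - 1 < (kerovT lam).length := by
    unfold kerovD at h2; omega
  set t := (kerovT lam).getD (j - 1) 0 with hT
  obtain ⟨ht1, _⟩ := kerovT_mem (kerovT_getD_mem hlen)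
  rcases eq_or_lt_of_le h1 with rfl | hj2
  · rw [kerovX, if_pos le_rfl, kerovY, ← hT]
    have hr : (lam.rowLen (t - 1) : ℝ) ≤ (lam.rowLen 0 : ℝ) := by
      exact_mod_cast lam.rowLen_anti _ _ (Nat.zero_le _)
    have hpos : 0 < θ * (t : ℝ) := by
      apply mul_pos hθ
      exact_mod_cast ht1
    linarith
  · have hi2 : ¬ j ≤ 1 := by omega
    rw [kerovX, if_neg hi2, kerovY, ← hT]
    set t' := (kerovT lam).getD (j - 2) 0 with hT'
    have htt : t' < t := by
      rw [hT, hT']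
      exact kerovT_getD_lt (by omega) hlen
    have hr : (lam.rowLen (t - 1) : ℝ) ≤ (lam.rowLen t' : ℝ) := by
      exact_mod_cast lam.rowLen_anti _ _ (by omega)
    have hth : θ * (t' : ℝ) < θ * (t : ℝ) := by
      apply mul_lt_mul_of_pos_left _ hθ
      exact_mod_cast htt
    linarith

lemma kerovX_lt_kerovY {θ : ℝ} (lam : YoungDiagram) {j : ℕ}
    (h1 : 1 ≤ j) (h2 : j ≤ kerovD lam - 1) :
    kerovX θ lam (j + 1) < kerovY θ lam j := by
  have hlen : j - 1 < (kerovT lam).length := by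
    unfold kerovD at h2; omega
  have hi2 : ¬ j + 1 ≤ 1 := by omega
  rw [kerovX, if_neg hi2, kerovY]
  have hidx : j + 1 - 2 = j - 1 := by omega
  rw [hidx]
  set t := (kerovT lam).getD (j - 1) 0 with hT
  obtain ⟨_, ht2⟩ := kerovT_mem (kerovT_getD_mem hlen)
  have : (lam.rowLen t : ℝ) < (lam.rowLen (t - 1) : ℝ) := by exact_mod_cast ht2
  linarith

lemma kerovX_succ_lt {θ : ℝ} (hθ : 0 < θ) (lam : YoungDiagram) {i : ℕ}
    (h1 : 1 ≤ i) (h2 : i ≤ kerovD lam - 1) :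
    kerovX θ lam (i + 1) < kerovX θ lam i :=
  (kerovX_lt_kerovY lam h1 h2).trans (kerovY_lt_kerovX hθ lam h1 h2)

lemma kerovX_strictAnti {θ : ℝ} (hθ : 0 < θ) (lam : YoungDiagram) :
    ∀ b a : ℕ, 1 ≤ a → a < b → b ≤ kerovD lam → kerovX θ lam b < kerovX θ lam a := by
  intro b
  induction b with
  | zero => intro a _ hab _; omega
  | succ n ih =>
    intro a ha hab hbd
    have han : a ≤ n := by omega
    rcases eq_or_lt_of_le han with rfl | hlt
    · exact kerovX_succ_lt hθ lam ha (by unfold kerovD at hbd ⊢; omega)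
    · exact (kerovX_succ_lt hθ lam (by omega) (by unfold kerovD at hbd ⊢; omega)).trans
        (ih a ha hlt (by omega))

lemma kerovX_anti {θ : ℝ} (hθ : 0 < θ) (lam : YoungDiagram) {a b : ℕ}
    (ha : 1 ≤ a) (hab : a ≤ b) (hb : b ≤ kerovD lam) :
    kerovX θ lam b ≤ kerovX θ lam a := by
  rcases eq_or_lt_of_le hab with rfl | h
  · exact le_refl _
  · exact (kerovX_strictAnti hθ lam b a ha h hb).le

end Aux

/-- The coefficients `π_i^↑(λ)`, `1 ≤ i ≤ d`, are strictly positive and sum to `1`. -/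
theorem kerovPi_pos_sum_one (θ : ℝ) (hθ : 0 < θ) (lam : YoungDiagram) :
    (∀ i ∈ Finset.Icc 1 (kerovD lam), 0 < kerovPi θ lam i) ∧
    ∑ i ∈ Finset.Icc 1 (kerovD lam), kerovPi θ lam i = 1 := by
  have hd1 : 1 ≤ kerovD lam := Nat.le_add_left 1 _
  have hinj : Set.InjOn (kerovX θ lam) ↑(Finset.Icc 1 (kerovD lam)) := by
    intro a ha b hb hab
    simp only [Finset.coe_Icc, Set.mem_Icc] at ha hb
    by_contra hne
    rcases lt_trichotomy a b with h | h | h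
    · exact absurd hab (ne_of_gt (kerovX_strictAnti hθ lam b a ha.1 h hb.2))
    · exact hne h
    · exact absurd hab (ne_of_lt (kerovX_strictAnti hθ lam a b hb.1 h ha.2))
  constructor
  · intro i hi
    rw [Finset.mem_Icc] at hi
    obtain ⟨hi1, hi2⟩ := hi
    rw [kerovPi]
    set s1 := Finset.Icc 1 (kerovD lam - 1) with hs1
    set s2 := (Finset.Icc 1 (kerovD lam)).erase i with hs2
    set f : ℕ → ℝ := fun j => kerovX θ lam i - kerovY θ lam j with hf
    set g : ℕ → ℝ := fun l => kerovX θ lam i - kerovX θ lam l with hg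
    -- split products
    have hnum : ∏ j ∈ s1, f j
        = (∏ j ∈ s1.filter (· < i), f j) * ∏ j ∈ s1.filter (fun j => ¬ j < i), f j :=
      (Finset.prod_filter_mul_prod_filter_not s1 (· < i) f).symm
    have hden : ∏ l ∈ s2, g l
        = (∏ l ∈ s2.filter (· < i), g l) * ∏ l ∈ s2.filter (fun l => ¬ l < i), g l :=
      (Finset.prod_filter_mul_prod_filter_not s2 (· < i) g).symm
    -- cards of the negative parts
    have hc1 : (s1.filter (· < i)).card = i - 1 := by
      have : s1.filter (· < i) = Finset.Icc 1 (i - 1) := by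
        ext j
        simp only [hs1, Finset.mem_filter, Finset.mem_Icc]
        omega
      rw [this, Nat.card_Icc]
      omega
    have hc2 : (s2.filter (· < i)).card = i - 1 := by
      have : s2.filter (· < i) = Finset.Icc 1 (i - 1) := by
        ext l
        simp only [hs2, Finset.mem_filter, Finset.mem_erase, Finset.mem_Icc]
        omega
      rw [this, Nat.card_Icc]
      omega
    -- signs
    have hNn : 0 < (-1 : ℝ) ^ (i - 1) * ∏ j ∈ s1.filter (· < i), f j := by
      rw [← hc1]
      apply aux_prod_neg
      intro j hj
      simp only [hs1, Finset.mem_filter, Finset.mem_Icc] at hj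
      obtain ⟨⟨hj1, hj2⟩, hji⟩ := hj
      have h1 : kerovX θ lam i ≤ kerovX θ lam (j + 1) :=
        kerovX_anti hθ lam (by omega) (by omega) hi2
      have h2 : kerovX θ lam (j + 1) < kerovY θ lam j := kerovX_lt_kerovY lam hj1 hj2
      simp only [hf]
      linarith
    have hNp : 0 < ∏ j ∈ s1.filter (fun j => ¬ j < i), f j := by
      apply Finset.prod_pos
      intro j hj
      simp only [hs1, Finset.mem_filter, Finset.mem_Icc, not_lt] at hj
      obtain ⟨⟨hj1, hj2⟩, hij⟩ := hj
      have h1 : kerovX θ lam j ≤ kerovX θ lam i :=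
        kerovX_anti hθ lam hi1 hij (by omega)
      have h2 : kerovY θ lam j < kerovX θ lam j := kerovY_lt_kerovX hθ lam hj1 hj2
      simp only [hf]
      linarith
    have hDn : 0 < (-1 : ℝ) ^ (i - 1) * ∏ l ∈ s2.filter (· < i), g l := by
      rw [← hc2]
      apply aux_prod_neg
      intro l hl
      simp only [hs2, Finset.mem_filter, Finset.mem_erase, Finset.mem_Icc] at hl
      obtain ⟨⟨hne, hl1, hl2⟩, hli⟩ := hl
      have := kerovX_strictAnti hθ lam i l hl1 hli hi2
      simp only [hg]
      linarith
    have hDp : 0 < ∏ l ∈ s2.filter (fun l => ¬ l < i), g l := by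
      apply Finset.prod_pos
      intro l hl
      simp only [hs2, Finset.mem_filter, Finset.mem_erase, Finset.mem_Icc, not_lt] at hl
      obtain ⟨⟨hne, hl1, hl2⟩, hil⟩ := hl
      have hil' : i < l := lt_of_le_of_ne hil (Ne.symm hne)
      have := kerovX_strictAnti hθ lam l i hi1 hil' hl2
      simp only [hg]
      linarith
    have hsq : ((-1 : ℝ) ^ (i - 1)) * ((-1 : ℝ) ^ (i - 1)) = 1 := by
      rw [← pow_add, ← two_mul, pow_mul]
      norm_num
    have hnd : 0 < (∏ j ∈ s1, f j) * ∏ l ∈ s2, g l := by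
      have h1 := mul_pos (mul_pos hNn hDn) (mul_pos hNp hDp)
      have h2 : ((-1 : ℝ) ^ (i - 1) * ∏ j ∈ s1.filter (· < i), f j)
            * ((-1 : ℝ) ^ (i - 1) * ∏ l ∈ s2.filter (· < i), g l)
            * ((∏ j ∈ s1.filter (fun j => ¬ j < i), f j)
              * ∏ l ∈ s2.filter (fun l => ¬ l < i), g l)
          = (((-1 : ℝ) ^ (i - 1)) * ((-1 : ℝ) ^ (i - 1)))
            * ((∏ j ∈ s1, f j) * ∏ l ∈ s2, g l) := by
        rw [hnum, hden]; ring
      rw [h2, hsq, one_mul] at h1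
      exact h1
    exact div_pos_iff.mpr (mul_pos_iff.mp hnd)
  · have hne : (Finset.Icc 1 (kerovD lam)).Nonempty :=
      ⟨1, Finset.mem_Icc.mpr ⟨le_rfl, hd1⟩⟩
    have hcard : (Finset.Icc 1 (kerovD lam - 1)).card = (Finset.Icc 1 (kerovD lam)).card - 1 := by
      simp [Nat.card_Icc]
    have := aux_lagrange_sum hinj hne (Finset.Icc 1 (kerovD lam - 1)) hcard (kerovY θ lam)
    simpa [kerovPi] using this
end
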